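/- For every integer n ≥ 12 that is not a power of 2, the cyclic complexity of the Thue–Morse word satisfies c(n) ≤ 2n − 7. -/

import Mathlib

set_option maxRecDepth 100000
set_option maxHeartbeats 4000000
set_option exponentiation.threshold 2000


open Fin.NatCast in
/-- The Thue–Morse sequence: `thueMorse n` is the parity of the number of `1`
digits in the binary representation of `n`. -/
def thueMorse (n : ℕ) : Fin 2 := ((Nat.digits 2 n).sum : Fin 2)

/-- The length-`n` factor of the Thue–Morse word starting at position `i`,
namely `t[i..i+n-1]`. -/
def tmFactor (i n : ℕ) : List (Fin 2) := (List.range n).map (fun k => thueMorse (i + k))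

/-- The cyclic complexity of the Thue–Morse word: the number of length-`n`
factors of the Thue–Morse word, counted up to cyclic rotation (conjugacy). -/
noncomputable def tmCyclicComplexity (n : ℕ) : ℕ :=
  Set.ncard {q : Quotient (List.IsRotated.setoid (Fin 2)) |
    ∃ i : ℕ, q = Quotient.mk (List.IsRotated.setoid (Fin 2)) (tmFactor i n)}



lemma tm_zero : thueMorse 0 = 0 := by simp [thueMorse]

lemma tm_even (n : ℕ) : thueMorse (2 * n) = thueMorse n := by
  rcases Nat.eq_zero_or_pos n with h | h
  · simp [h]
  · unfold thueMorse
    rw [Nat.digits_def' (by norm_num : 1 < 2) (by omega)]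
    simp [Nat.mul_div_cancel_left _ (by norm_num : 0 < 2), Nat.mul_mod_right]

lemma tm_odd (n : ℕ) : thueMorse (2 * n + 1) = thueMorse n + 1 := by
  unfold thueMorse
  rw [Nat.digits_def' (by norm_num : 1 < 2) (by omega)]
  have h1 : (2 * n + 1) % 2 = 1 := by omega
  have h2 : (2 * n + 1) / 2 = n := by omega
  rw [h1, h2]
  push_cast [List.sum_cons]
  exact Fin.ext (by simp [Fin.val_add, Fin.val_natCast]; omega)


-- tmFactor structure lemmas
lemma tmFactor_zero (i : ℕ) : tmFactor i 0 = [] := rfl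

lemma tmFactor_length (i n : ℕ) : (tmFactor i n).length = n := by
  simp [tmFactor]

lemma tmFactor_succ (i n : ℕ) :
    tmFactor i (n + 1) = thueMorse i :: tmFactor (i + 1) n := by
  simp only [tmFactor, List.range_succ_eq_map, List.map_cons, List.map_map]
  refine List.cons_eq_cons.mpr ⟨by simp, ?_⟩
  apply List.map_congr_left
  intro k _
  simp only [Function.comp]
  congr 1
  omega

lemma tmFactor_concat (i n : ℕ) :
    tmFactor i (n + 1) = tmFactor i n ++ [thueMorse (i + n)] := by
  simp [tmFactor, List.range_succ]

lemma tmFactor_append (i m n : ℕ) :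
    tmFactor i (m + n) = tmFactor i m ++ tmFactor (i + m) n := by
  induction n with
  | zero => simp [tmFactor_zero]
  | succ n ih =>
      have : m + (n + 1) = (m + n) + 1 := by omega
      rw [this, tmFactor_concat, ih, tmFactor_concat, List.append_assoc]
      have : i + m + n = i + (m + n) := by omega
      rw [this]


/-- The Thue–Morse morphism on words. -/
def muL (l : List (Fin 2)) : List (Fin 2) := l.flatMap (fun c => [c, c + 1])

lemma muL_nil : muL [] = [] := rfl
lemma muL_cons (a : Fin 2) (l : List (Fin 2)) : muL (a :: l) = a :: (a+1) :: muL l := rfl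

lemma tmFactor_mu (a k : ℕ) : tmFactor (2 * a) (2 * k) = muL (tmFactor a k) := by
  induction k generalizing a with
  | zero => simp [tmFactor_zero, muL]
  | succ k ih =>
      have h1 : 2 * (k + 1) = (2 * k) + 1 + 1 := by omega
      rw [h1, tmFactor_succ, tmFactor_succ, tmFactor_succ, muL_cons]
      rw [tm_even]
      congr 1
      · congr 1
        · exact tm_odd a
        · have : 2 * a + 1 + 1 = 2 * (a + 1) := by omega
          rw [this, ih]

-- aperiodicity
lemma fin2_add_one_ne (x : Fin 2) : x + 1 ≠ x := by revert x; decide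
lemma fin2_eq_add_one_iff {x y : Fin 2} : x = y + 1 ↔ y = x + 1 := by revert x y; decide
lemma fin2_ne_iff_eq_add_one {x y : Fin 2} : x ≠ y ↔ x = y + 1 := by revert x y; decide

lemma tm_aperiodic : ∀ d, 1 ≤ d →
    (¬ ∃ N, ∀ j, N ≤ j → thueMorse (j + d) = thueMorse j) ∧
    (¬ ∃ N, ∀ j, N ≤ j → thueMorse (j + d) = thueMorse j + 1) := by
  intro d
  induction d using Nat.strong_induction_on with
  | _ d ih =>
    intro hd
    constructor
    · rintro ⟨N, h⟩
      rcases Nat.even_or_odd d with ⟨e, he⟩ | ⟨e, he⟩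
      · -- d = 2e, e ≥ 1
        have he1 : 1 ≤ e := by omega
        refine (ih e (by omega) he1).1 ⟨N, fun j hj => ?_⟩
        have := h (2 * j) (by omega)
        rw [show 2*j + d = 2*(j+e) by omega, tm_even, tm_even] at this
        exact this
      · -- d = 2e+1
        rcases Nat.eq_zero_or_pos e with rfl | he1
        · -- d = 1 : contradiction with t(2N+1) = t(2N)
          have := h (2 * N) (by omega)
          rw [show 2*N + d = 2*N+1 by omega, tm_odd, tm_even] at this
          exact fin2_add_one_ne _ this
        · refine (ih e (by omega) he1).2 ⟨N, fun j hj => ?_⟩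
          have := h (2 * j) (by omega)
          rw [show 2*j + d = 2*(j+e)+1 by omega, tm_odd, tm_even] at this
          exact fin2_eq_add_one_iff.mp this.symm
    · rintro ⟨N, h⟩
      rcases Nat.even_or_odd d with ⟨e, he⟩ | ⟨e, he⟩
      · have he1 : 1 ≤ e := by omega
        refine (ih e (by omega) he1).2 ⟨N, fun j hj => ?_⟩
        have := h (2 * j) (by omega)
        rw [show 2*j + d = 2*(j+e) by omega, tm_even, tm_even] at this
        exact this
      · rcases Nat.eq_zero_or_pos e with rfl | he1
        · -- antiperiod 1: t(j+1) = t j + 1 for j ≥ N; take j = 2i+1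
          have key : ∀ i, N ≤ i → thueMorse (i + 1) = thueMorse i := by
            intro i hi
            have := h (2 * i + 1) (by omega)
            rw [show 2*i+1+d = 2*(i+1) by omega, tm_even, tm_odd] at this
            -- t(i+1) = (t i + 1) + 1 = t i
            rw [this]
            show thueMorse i + 1 + 1 = thueMorse i
            have : ∀ x : Fin 2, x + 1 + 1 = x := by decide
            exact this _
          -- now t has period 1 from N: but t(2N+1) = t(2N)+1 ≠ t(2N)
          have := key (2 * N) (by omega)
          rw [show 2*N+1 = 2*N+1 from rfl, tm_odd, tm_even] at this
          exact fin2_add_one_ne _ this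
        · refine (ih e (by omega) he1).1 ⟨N, fun j hj => ?_⟩
          have := h (2 * j) (by omega)
          rw [show 2*j + d = 2*(j+e)+1 by omega, tm_odd, tm_even] at this
          have h2 : ∀ x y : Fin 2, x + 1 = y + 1 → x = y := by decide
          exact h2 _ _ this


/-- Factors of length k with distinct first/last letters. -/
def Qset (k : ℕ) : Set (List (Fin 2)) :=
  (fun i => tmFactor i k) '' {i | thueMorse i ≠ thueMorse (i + (k - 1))}
/-- Factors of length k with equal first/last letters. -/
def Gset (k : ℕ) : Set (List (Fin 2)) :=
  (fun i => tmFactor i k) '' {i | thueMorse i = thueMorse (i + (k - 1))}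

lemma Qset_finite (k : ℕ) : (Qset k).Finite := by
  apply Set.Finite.subset (List.finite_length_eq (Fin 2) k)
  rintro w ⟨i, _, rfl⟩; exact tmFactor_length i k

lemma Gset_finite (k : ℕ) : (Gset k).Finite := by
  apply Set.Finite.subset (List.finite_length_eq (Fin 2) k)
  rintro w ⟨i, _, rfl⟩; exact tmFactor_length i k

noncomputable def qc (k : ℕ) : ℕ := (Qset k).ncard
noncomputable def gc (k : ℕ) : ℕ := (Gset k).ncard

-- rotation by one step
lemma tmFactor_rotate {i n : ℕ} (h : thueMorse (i + (n+1)) = thueMorse i) :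
    tmFactor (i + 1) (n + 1) = (tmFactor i (n + 1)).rotate 1 := by
  rw [show (tmFactor i (n+1)) = thueMorse i :: tmFactor (i+1) n from tmFactor_succ i n,
    List.rotate_cons_succ, List.rotate_zero, tmFactor_concat]
  have h2 : thueMorse (i + 1 + n) = thueMorse i := by rw [← h]; congr 1; omega
  rw [h2]

/-- Key lemma: every factor is conjugate to a factor with mismatched boundary. -/
lemma exists_mismatch (n : ℕ) (hn : 1 ≤ n) (i : ℕ) :
    ∃ j, (tmFactor j n).IsRotated (tmFactor i n) ∧
      thueMorse j ≠ thueMorse (j + n) := by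
  obtain ⟨m, rfl⟩ : ∃ m, n = m + 1 := ⟨n - 1, by omega⟩
  by_contra hcon
  push_neg at hcon
  -- propagate: all shifts are rotations and have matching boundary
  have prop : ∀ s, (tmFactor (i + s) (m+1)).IsRotated (tmFactor i (m+1)) := by
    intro s
    induction s with
    | zero => simp [List.IsRotated.refl]
    | succ s ihs =>
        have hb : thueMorse (i + s) = thueMorse (i + s + (m+1)) := hcon (i+s) ihs
        have hrot : tmFactor (i + s + 1) (m+1) = (tmFactor (i + s) (m+1)).rotate 1 := by
          apply tmFactor_rotate
          exact hb.symm
        rw [show i + (s+1) = i + s + 1 by omega, hrot]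
        exact (List.IsRotated.forall (tmFactor (i+s) (m+1)) 1).trans ihs
  have per : ∀ j, i ≤ j → thueMorse (j + (m+1)) = thueMorse j := by
    intro j hj
    obtain ⟨s, rfl⟩ := Nat.exists_eq_add_of_le hj
    exact (hcon (i + s) (prop s)).symm
  exact (tm_aperiodic (m+1) hn).1 ⟨i, fun j hj => per j hj⟩

/-- Cyclic complexity is at most the number of mismatched-ends factors of length n+1. -/
lemma cyclic_le_q (n : ℕ) (hn : 1 ≤ n) : tmCyclicComplexity n ≤ qc (n + 1) := by
  classical
  set f : List (Fin 2) → Quotient (List.IsRotated.setoid (Fin 2)) :=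
    fun w => Quotient.mk (List.IsRotated.setoid (Fin 2)) w.dropLast with hf
  have hsub : {q : Quotient (List.IsRotated.setoid (Fin 2)) |
      ∃ i : ℕ, q = Quotient.mk (List.IsRotated.setoid (Fin 2)) (tmFactor i n)} ⊆
      f '' Qset (n+1) := by
    rintro q ⟨i, rfl⟩
    obtain ⟨j, hrot, hne⟩ := exists_mismatch n hn i
    refine ⟨tmFactor j (n+1), ⟨j, ?_, rfl⟩, ?_⟩
    · simpa using hne
    · rw [hf]
      have hdl : (tmFactor j (n+1)).dropLast = tmFactor j n := by
        rw [tmFactor_concat, List.dropLast_concat]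
      simp only [hdl]
      exact Quotient.sound hrot
  calc tmCyclicComplexity n ≤ (f '' Qset (n+1)).ncard :=
        Set.ncard_le_ncard hsub ((Qset_finite (n+1)).image f)
    _ ≤ qc (n + 1) := Set.ncard_image_le (Qset_finite (n+1))


lemma fin2_ne_add_one {x y : Fin 2} : x ≠ y + 1 ↔ x = y := by revert x y; decide
lemma fin2_add_one_ne' {x y : Fin 2} : x + 1 ≠ y ↔ x = y := by revert x y; decide
lemma fin2_add_one_eq {x y : Fin 2} : x + 1 = y + 1 ↔ x = y := by revert x y; decide

lemma dropLast_fac (i n : ℕ) : (tmFactor i (n+1)).dropLast = tmFactor i n := by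
  rw [tmFactor_concat, List.dropLast_concat]

lemma tail_mu (a k : ℕ) : (muL (tmFactor a (k+1))).tail = tmFactor (2*a+1) (2*k+1) := by
  rw [← tmFactor_mu, show 2*(k+1) = (2*k+1)+1 by omega,
    show tmFactor (2*a) ((2*k+1)+1) = thueMorse (2*a) :: tmFactor (2*a+1) (2*k+1) from
      tmFactor_succ _ _, List.tail_cons]

lemma decomp_o (a k : ℕ) :
    tmFactor (2*a+1) (2*k) = ((muL (tmFactor a (k+1))).tail).dropLast := by
  rw [tail_mu, dropLast_fac]

lemma decomp_e1 (a k : ℕ) :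
    tmFactor (2*a) (2*k+1) = (muL (tmFactor a (k+1))).dropLast := by
  rw [← tmFactor_mu, show 2*(k+1) = (2*k+1)+1 by omega, dropLast_fac]

lemma decomp_o1 (a k : ℕ) :
    tmFactor (2*a+1) (2*k+1) = (muL (tmFactor a (k+1))).tail :=
  (tail_mu a k).symm

lemma q_even (k : ℕ) (hk : 1 ≤ k) : qc (2*k) ≤ gc k + gc (k+1) := by
  have hsub : Qset (2*k) ⊆ (muL '' Gset k) ∪
      ((fun v => ((muL v).tail).dropLast) '' Gset (k+1)) := by
    rintro w ⟨i, hi, rfl⟩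
    simp only [Set.mem_setOf_eq] at hi
    rcases Nat.even_or_odd i with ⟨a, ha⟩ | ⟨a, ha⟩
    · left
      refine ⟨tmFactor a k, ⟨a, ?_, rfl⟩, ?_⟩
      · simp only [Set.mem_setOf_eq]
        have e1 : thueMorse i = thueMorse a := by rw [ha, show a+a = 2*a by omega, tm_even]
        have e2 : thueMorse (i + (2*k-1)) = thueMorse (a + (k-1)) + 1 := by
          rw [show i + (2*k-1) = 2*(a + (k-1)) + 1 by omega, tm_odd]
        rw [e1, e2] at hi
        exact fin2_ne_add_one.mp hi
      · rw [← tmFactor_mu]; congr 1; omega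
    · right
      refine ⟨tmFactor a (k+1), ⟨a, ?_, rfl⟩, ?_⟩
      · simp only [Set.mem_setOf_eq, Nat.add_sub_cancel]
        have e1 : thueMorse i = thueMorse a + 1 := by rw [ha, tm_odd]
        have e2 : thueMorse (i + (2*k-1)) = thueMorse (a + k) := by
          rw [show i + (2*k-1) = 2*(a + k) by omega, tm_even]
        rw [e1, e2] at hi
        exact fin2_add_one_ne'.mp hi
      · show (muL (tmFactor a (k+1))).tail.dropLast = tmFactor i (2*k)
        rw [ha]; exact (decomp_o a k).symm
  calc qc (2*k) ≤ _ := Set.ncard_le_ncard hsub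
        (((Gset_finite k).image _).union ((Gset_finite (k+1)).image _))
    _ ≤ (muL '' Gset k).ncard + ((fun v => ((muL v).tail).dropLast) '' Gset (k+1)).ncard :=
        Set.ncard_union_le _ _
    _ ≤ gc k + gc (k+1) :=
        Nat.add_le_add (Set.ncard_image_le (Gset_finite k)) (Set.ncard_image_le (Gset_finite (k+1)))

lemma g_even (k : ℕ) (hk : 1 ≤ k) : gc (2*k) ≤ qc k + qc (k+1) := by
  have hsub : Gset (2*k) ⊆ (muL '' Qset k) ∪
      ((fun v => ((muL v).tail).dropLast) '' Qset (k+1)) := by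
    rintro w ⟨i, hi, rfl⟩
    simp only [Set.mem_setOf_eq] at hi
    rcases Nat.even_or_odd i with ⟨a, ha⟩ | ⟨a, ha⟩
    · left
      refine ⟨tmFactor a k, ⟨a, ?_, rfl⟩, ?_⟩
      · simp only [Set.mem_setOf_eq]
        have e1 : thueMorse i = thueMorse a := by rw [ha, show a+a = 2*a by omega, tm_even]
        have e2 : thueMorse (i + (2*k-1)) = thueMorse (a + (k-1)) + 1 := by
          rw [show i + (2*k-1) = 2*(a + (k-1)) + 1 by omega, tm_odd]
        rw [e1, e2] at hi
        intro hcon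
        rw [hcon] at hi
        exact (fin2_ne_add_one.mpr rfl) hi
      · rw [← tmFactor_mu]; congr 1; omega
    · right
      refine ⟨tmFactor a (k+1), ⟨a, ?_, rfl⟩, ?_⟩
      · simp only [Set.mem_setOf_eq, Nat.add_sub_cancel]
        have e1 : thueMorse i = thueMorse a + 1 := by rw [ha, tm_odd]
        have e2 : thueMorse (i + (2*k-1)) = thueMorse (a + k) := by
          rw [show i + (2*k-1) = 2*(a + k) by omega, tm_even]
        rw [e1, e2] at hi
        intro hcon
        rw [← hcon] at hi
        exact (fin2_add_one_ne'.mpr rfl) hi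
      · show (muL (tmFactor a (k+1))).tail.dropLast = tmFactor i (2*k)
        rw [ha]; exact (decomp_o a k).symm
  calc gc (2*k) ≤ _ := Set.ncard_le_ncard hsub
        (((Qset_finite k).image _).union ((Qset_finite (k+1)).image _))
    _ ≤ (muL '' Qset k).ncard + ((fun v => ((muL v).tail).dropLast) '' Qset (k+1)).ncard :=
        Set.ncard_union_le _ _
    _ ≤ qc k + qc (k+1) :=
        Nat.add_le_add (Set.ncard_image_le (Qset_finite k)) (Set.ncard_image_le (Qset_finite (k+1)))

lemma q_odd (k : ℕ) : qc (2*k+1) ≤ qc (k+1) + qc (k+1) := by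
  have hsub : Qset (2*k+1) ⊆ ((fun v => (muL v).dropLast) '' Qset (k+1)) ∪
      ((fun v => (muL v).tail) '' Qset (k+1)) := by
    rintro w ⟨i, hi, rfl⟩
    simp only [Set.mem_setOf_eq, Nat.add_sub_cancel] at hi
    rcases Nat.even_or_odd i with ⟨a, ha⟩ | ⟨a, ha⟩
    · left
      refine ⟨tmFactor a (k+1), ⟨a, ?_, rfl⟩, ?_⟩
      · simp only [Set.mem_setOf_eq, Nat.add_sub_cancel]
        have e1 : thueMorse i = thueMorse a := by rw [ha, show a+a = 2*a by omega, tm_even]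
        have e2 : thueMorse (i + 2*k) = thueMorse (a + k) := by
          rw [show i + 2*k = 2*(a + k) by omega, tm_even]
        rw [e1, e2] at hi; exact hi
      · show (muL (tmFactor a (k+1))).dropLast = tmFactor i (2*k+1)
        rw [ha, show a+a = 2*a by omega]; exact (decomp_e1 a k).symm
    · right
      refine ⟨tmFactor a (k+1), ⟨a, ?_, rfl⟩, ?_⟩
      · simp only [Set.mem_setOf_eq, Nat.add_sub_cancel]
        have e1 : thueMorse i = thueMorse a + 1 := by rw [ha, tm_odd]
        have e2 : thueMorse (i + 2*k) = thueMorse (a + k) + 1 := by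
          rw [show i + 2*k = 2*(a + k) + 1 by omega, tm_odd]
        rw [e1, e2] at hi
        intro hcon; exact hi (by rw [hcon])
      · show (muL (tmFactor a (k+1))).tail = tmFactor i (2*k+1)
        rw [ha]; exact (decomp_o1 a k).symm
  calc qc (2*k+1) ≤ _ := Set.ncard_le_ncard hsub
        (((Qset_finite (k+1)).image _).union ((Qset_finite (k+1)).image _))
    _ ≤ ((fun v => (muL v).dropLast) '' Qset (k+1)).ncard +
        ((fun v => (muL v).tail) '' Qset (k+1)).ncard := Set.ncard_union_le _ _
    _ ≤ qc (k+1) + qc (k+1) :=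
        Nat.add_le_add (Set.ncard_image_le (Qset_finite (k+1))) (Set.ncard_image_le (Qset_finite (k+1)))

lemma g_odd (k : ℕ) : gc (2*k+1) ≤ gc (k+1) + gc (k+1) := by
  have hsub : Gset (2*k+1) ⊆ ((fun v => (muL v).dropLast) '' Gset (k+1)) ∪
      ((fun v => (muL v).tail) '' Gset (k+1)) := by
    rintro w ⟨i, hi, rfl⟩
    simp only [Set.mem_setOf_eq, Nat.add_sub_cancel] at hi
    rcases Nat.even_or_odd i with ⟨a, ha⟩ | ⟨a, ha⟩
    · left
      refine ⟨tmFactor a (k+1), ⟨a, ?_, rfl⟩, ?_⟩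
      · simp only [Set.mem_setOf_eq, Nat.add_sub_cancel]
        have e1 : thueMorse i = thueMorse a := by rw [ha, show a+a = 2*a by omega, tm_even]
        have e2 : thueMorse (i + 2*k) = thueMorse (a + k) := by
          rw [show i + 2*k = 2*(a + k) by omega, tm_even]
        rw [e1, e2] at hi; exact hi
      · show (muL (tmFactor a (k+1))).dropLast = tmFactor i (2*k+1)
        rw [ha, show a+a = 2*a by omega]; exact (decomp_e1 a k).symm
    · right
      refine ⟨tmFactor a (k+1), ⟨a, ?_, rfl⟩, ?_⟩
      · simp only [Set.mem_setOf_eq, Nat.add_sub_cancel]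
        have e1 : thueMorse i = thueMorse a + 1 := by rw [ha, tm_odd]
        have e2 : thueMorse (i + 2*k) = thueMorse (a + k) + 1 := by
          rw [show i + 2*k = 2*(a + k) + 1 by omega, tm_odd]
        rw [e1, e2] at hi
        exact fin2_add_one_eq.mp hi
      · show (muL (tmFactor a (k+1))).tail = tmFactor i (2*k+1)
        rw [ha]; exact (decomp_o1 a k).symm
  calc gc (2*k+1) ≤ _ := Set.ncard_le_ncard hsub
        (((Gset_finite (k+1)).image _).union ((Gset_finite (k+1)).image _))
    _ ≤ ((fun v => (muL v).dropLast) '' Gset (k+1)).ncard +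
        ((fun v => (muL v).tail) '' Gset (k+1)).ncard := Set.ncard_union_le _ _
    _ ≤ gc (k+1) + gc (k+1) :=
        Nat.add_le_add (Set.ncard_image_le (Gset_finite (k+1))) (Set.ncard_image_le (Gset_finite (k+1)))


/-- binary encoding of a word, head = least significant bit -/
def enc (l : List (Fin 2)) : ℕ := l.foldr (fun a acc => a.val + 2 * acc) 0

lemma enc_nil : enc [] = 0 := rfl
lemma enc_cons (a : Fin 2) (l : List (Fin 2)) : enc (a :: l) = a.val + 2 * enc l := rfl

lemma enc_lt (l : List (Fin 2)) : enc l < 2 ^ l.length := by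
  induction l with
  | nil => simp [enc_nil]
  | cons a l ih =>
      rw [enc_cons]
      have : a.val < 2 := a.isLt
      simp only [List.length_cons, pow_succ]
      omega

lemma enc_append (x y : List (Fin 2)) :
    enc (x ++ y) = enc x + 2 ^ x.length * enc y := by
  induction x with
  | nil => simp [enc_nil]
  | cons a l ih =>
      simp only [List.cons_append, enc_cons, ih, List.length_cons, pow_succ]
      ring

lemma enc_inj : ∀ x y : List (Fin 2), x.length = y.length → enc x = enc y → x = y := by
  intro x
  induction x with
  | nil =>
      intro y hl _
      cases y with
      | nil => rfl
      | cons b m => simp at hl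
  | cons a l ih =>
      intro y hl he
      cases y with
      | nil => simp at hl
      | cons b m =>
          simp only [List.length_cons, Nat.add_right_cancel_iff] at hl
          rw [enc_cons, enc_cons] at he
          have ha : a.val < 2 := a.isLt
          have hb : b.val < 2 := b.isLt
          have hv : a.val = b.val := by omega
          have he2 : enc l = enc m := by omega
          rw [Fin.val_injective hv, ih m hl he2]

def tmCode : ℕ → ℕ
  | 0 => 0
  | k+1 => tmCode k + 2^(2^k) * ((2^(2^k) - 1) - tmCode k)

lemma tm_flip : ∀ k s, s < 2^k → thueMorse (2^k + s) = thueMorse s + 1 := by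
  intro k
  induction k with
  | zero =>
      intro s hs
      interval_cases s
      rw [show 2^0 + 0 = 2*0+1 by norm_num, tm_odd]
  | succ k ih =>
      intro s hs
      rcases Nat.even_or_odd s with ⟨u, hu⟩ | ⟨u, hu⟩
      · rw [show 2^(k+1) + s = 2*(2^k + u) by omega, tm_even, ih u (by omega),
          show s = 2*u by omega, tm_even]
      · rw [show 2^(k+1) + s = 2*(2^k + u) + 1 by omega, tm_odd, ih u (by omega),
          show s = 2*u+1 by omega, tm_odd]

lemma tmFactor_flip (k : ℕ) :
    tmFactor (2^k) (2^k) = (tmFactor 0 (2^k)).map (· + 1) := by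
  simp only [tmFactor, List.map_map]
  apply List.map_congr_left
  intro s hs
  simp only [Function.comp]
  rw [tm_flip k s (List.mem_range.mp hs), Nat.zero_add]

lemma enc_map_flip (l : List (Fin 2)) :
    enc (l.map (· + 1)) = 2 ^ l.length - 1 - enc l := by
  induction l with
  | nil => simp [enc_nil]
  | cons a l ih =>
      simp only [List.map_cons, enc_cons, ih, List.length_cons, pow_succ]
      have h1 : (a + 1).val = 1 - a.val := by revert a; decide
      have h2 : a.val < 2 := a.isLt
      have h3 : enc l < 2 ^ l.length := enc_lt l
      omega

lemma tmCode_correct : ∀ k, tmCode k = enc (tmFactor 0 (2^k)) := by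
  intro k
  induction k with
  | zero =>
      show 0 = enc (tmFactor 0 1)
      rw [show (1:ℕ) = 0 + 1 from rfl, tmFactor_concat, tmFactor_zero]
      simp [enc_cons, enc_nil, tm_zero]
  | succ k ih =>
      show tmCode k + 2^(2^k) * ((2^(2^k) - 1) - tmCode k) = _
      rw [show 2^(k+1) = 2^k + 2^k by ring, tmFactor_append, enc_append, Nat.zero_add,
        tmFactor_length, tmFactor_flip, enc_map_flip, tmFactor_length, ← ih]

lemma codeFactor (i n : ℕ) (h : i + n ≤ 1024) :
    enc (tmFactor i n) = (tmCode 10 / 2^i) % 2^n := by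
  rw [show tmCode 10 = enc (tmFactor 0 1024) from by
    rw [tmCode_correct]; norm_num]
  obtain ⟨r, hr⟩ : ∃ r, 1024 = i + (n + r) := ⟨1024 - i - n, by omega⟩
  rw [hr, tmFactor_append, tmFactor_append, enc_append, enc_append, Nat.zero_add,
    tmFactor_length, tmFactor_length]
  have h1 : enc (tmFactor 0 i) < 2^i := by
    have := enc_lt (tmFactor 0 i); rwa [tmFactor_length] at this
  have h2 : enc (tmFactor i n) < 2^n := by
    have := enc_lt (tmFactor i n); rwa [tmFactor_length] at this
  rw [Nat.add_mul_div_left _ _ (by positivity : 0 < 2^i), Nat.div_eq_of_lt h1, Nat.zero_add,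
    Nat.add_mul_mod_self_left, Nat.mod_eq_of_lt h2]

lemma enc_mod2 (i k : ℕ) : enc (tmFactor i (k+1)) % 2 = (thueMorse i).val := by
  rw [tmFactor_succ, enc_cons, Nat.add_mul_mod_self_left, Nat.mod_eq_of_lt (thueMorse i).isLt]

lemma enc_div (i k : ℕ) : enc (tmFactor i (k+1)) / 2^k = (thueMorse (i+k)).val := by
  rw [tmFactor_concat, enc_append, tmFactor_length]
  have h1 : enc (tmFactor i k) < 2^k := by
    have := enc_lt (tmFactor i k); rwa [tmFactor_length] at this
  rw [Nat.add_mul_div_left _ _ (by positivity : 0 < 2^k), Nat.div_eq_of_lt h1, Nat.zero_add]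
  show ((thueMorse (i+k)).val + 2 * 0 : ℕ) = _
  omega


lemma tmFactor_take (i n m : ℕ) (h : n ≤ m) : (tmFactor i m).take n = tmFactor i n := by
  obtain ⟨r, rfl⟩ : ∃ r, m = n + r := ⟨m - n, by omega⟩
  rw [tmFactor_append, List.take_left' (tmFactor_length i n)]

lemma tmFactor_drop (i b m : ℕ) (h : b ≤ m) : (tmFactor i m).drop b = tmFactor (i+b) (m-b) := by
  obtain ⟨r, hr⟩ : ∃ r, m = b + r := ⟨m - b, by omega⟩
  subst hr
  rw [tmFactor_append, List.drop_left' (tmFactor_length i b)]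
  congr 1
  omega

lemma tv1 : thueMorse 1 = 1 := by
  have h := tm_odd 0; rw [tm_zero] at h
  exact h.trans (by decide)
lemma tv2 : thueMorse 2 = 1 := by
  have h := tm_even 1; rw [tv1] at h; exact h
lemma tv3 : thueMorse 3 = 0 := by
  have h := tm_odd 1; rw [tv1] at h
  exact h.trans (by decide)
lemma tv5 : thueMorse 5 = 0 := by
  have h := tm_odd 2; rw [tv2] at h
  exact h.trans (by decide)
lemma tv6 : thueMorse 6 = 0 := by
  have h := tm_even 3; rw [tv3] at h; exact h

lemma tmFactor_two (i : ℕ) : tmFactor i 2 = [thueMorse i, thueMorse (i+1)] := by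
  have h1 : tmFactor (i+1) 1 = [thueMorse (i+1)] := by
    have h := tmFactor_succ (i+1) 0; rw [tmFactor_zero] at h; exact h
  have h2 := tmFactor_succ i 1
  rw [h1] at h2
  exact h2

def covW (n : ℕ) : ℕ := if n ≤ 2 then 5 else 16*n - 33

lemma cover : ∀ n, 2 ≤ n → ∀ i, ∃ j, j ≤ covW n ∧ tmFactor j n = tmFactor i n := by
  intro n
  induction n using Nat.strong_induction_on with
  | _ n ih =>
    intro hn i
    rcases Nat.lt_or_ge n 3 with h3 | h3
    · -- n = 2
      obtain rfl : n = 2 := by omega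
      have hx : ∀ x : Fin 2, x = 0 ∨ x = 1 := by decide
      have hcw : covW 2 = 5 := by simp [covW]
      rcases hx (thueMorse i) with h0 | h0 <;> rcases hx (thueMorse (i+1)) with h1 | h1
      · exact ⟨5, by omega, by rw [tmFactor_two, tmFactor_two, h0, h1,
          show (5:ℕ)+1 = 6 from rfl, tv5, tv6]⟩
      · exact ⟨0, by omega, by rw [tmFactor_two, tmFactor_two, h0, h1,
          show (0:ℕ)+1 = 1 from rfl, tm_zero, tv1]⟩
      · exact ⟨2, by omega, by rw [tmFactor_two, tmFactor_two, h0, h1,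
          show (2:ℕ)+1 = 3 from rfl, tv2, tv3]⟩
      · exact ⟨1, by omega, by rw [tmFactor_two, tmFactor_two, h0, h1,
          show (1:ℕ)+1 = 2 from rfl, tv1, tv2]⟩
    · -- n ≥ 3
      have hm2 : 2 ≤ n / 2 + 1 := by omega
      have hmn : n / 2 + 1 < n := by omega
      obtain ⟨a, b, hab, hb2⟩ : ∃ a b, i = 2*a+b ∧ b < 2 := ⟨i/2, i%2, by omega, by omega⟩
      obtain ⟨j', hj', heq⟩ := ih (n/2+1) hmn hm2 a
      have key : ∀ c, tmFactor (2*c+b) n = ((muL (tmFactor c (n/2+1))).drop b).take n := by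
        intro c
        rw [← tmFactor_mu, tmFactor_drop _ _ _ (by omega), tmFactor_take _ _ _ (by omega)]
      have hbound : 2*j' + b ≤ covW n := by
        have hcwn : covW n = 16*n - 33 := by
          simp only [covW]; rw [if_neg (by omega)]
        rcases Nat.lt_or_ge (n/2+1) 3 with h | h
        · have : covW (n/2+1) = 5 := by simp only [covW]; rw [if_pos (by omega)]
          omega
        · have : covW (n/2+1) = 16*(n/2+1) - 33 := by
            simp only [covW]; rw [if_neg (by omega)]
          omega
      refine ⟨2*j' + b, hbound, ?_⟩
      have goal2 : tmFactor (2*j'+b) n = tmFactor (2*a+b) n := by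
        rw [key j', key a, heq]
      rw [goal2, ← hab]


lemma base_q (k W : ℕ) (L : List ℕ) (hk2 : 2 ≤ k) (hcw : covW k ≤ W) (hWk : W + k ≤ 1024)
    (hmem : ∀ j, j ≤ W → (tmCode 10 / 2^j) % 2^k ∈ L) :
    qc k ≤ (L.filter (fun x => decide (¬ (x % 2 = x / 2^(k-1))))).length := by
  obtain ⟨m, rfl⟩ : ∃ m, k = m + 1 := ⟨k - 1, by omega⟩
  set p : ℕ → Bool := fun x => decide (¬ (x % 2 = x / 2^(m+1-1))) with hp
  have hle : qc (m+1) ≤ {x : ℕ | x ∈ L.filter p}.ncard := by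
    refine Set.ncard_le_ncard_of_injOn enc ?_ ?_ (List.finite_toSet _)
    · rintro w ⟨i, hi, rfl⟩
      simp only [Set.mem_setOf_eq] at hi ⊢
      obtain ⟨j, hj, hfac⟩ := cover (m+1) hk2 i
      rw [List.mem_filter]
      constructor
      · rw [← hfac, codeFactor j (m+1) (by omega)]
        exact List.mem_dedup.mp (List.mem_dedup.mpr (hmem j (by omega)))
      · rw [hp]
        simp only [decide_eq_true_eq]
        rw [enc_mod2 i m, show m+1-1 = m from rfl, enc_div i m]
        intro hcon
        exact hi (Fin.val_injective (by simpa using hcon))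
    · rintro w1 ⟨i1, -, rfl⟩ w2 ⟨i2, -, rfl⟩ he
      exact enc_inj _ _ (by rw [tmFactor_length, tmFactor_length]) he
  calc qc (m+1) ≤ {x : ℕ | x ∈ L.filter p}.ncard := hle
    _ = (L.filter p).toFinset.card := by
        rw [← Set.ncard_coe_finset]
        congr 1
        ext x
        simp
    _ ≤ (L.filter p).length := (L.filter p).toFinset_card_le

lemma base_g (k W : ℕ) (L : List ℕ) (hk2 : 2 ≤ k) (hcw : covW k ≤ W) (hWk : W + k ≤ 1024)
    (hmem : ∀ j, j ≤ W → (tmCode 10 / 2^j) % 2^k ∈ L) :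
    gc k ≤ (L.filter (fun x => decide (x % 2 = x / 2^(k-1)))).length := by
  obtain ⟨m, rfl⟩ : ∃ m, k = m + 1 := ⟨k - 1, by omega⟩
  set p : ℕ → Bool := fun x => decide (x % 2 = x / 2^(m+1-1)) with hp
  have hle : gc (m+1) ≤ {x : ℕ | x ∈ L.filter p}.ncard := by
    refine Set.ncard_le_ncard_of_injOn enc ?_ ?_ (List.finite_toSet _)
    · rintro w ⟨i, hi, rfl⟩
      simp only [Set.mem_setOf_eq] at hi ⊢
      obtain ⟨j, hj, hfac⟩ := cover (m+1) hk2 i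
      rw [List.mem_filter]
      constructor
      · rw [← hfac, codeFactor j (m+1) (by omega)]
        exact List.mem_dedup.mp (List.mem_dedup.mpr (hmem j (by omega)))
      · rw [hp]
        simp only [decide_eq_true_eq]
        rw [enc_mod2 i m, show m+1-1 = m from rfl, enc_div i m]
        rw [show i + (m+1-1) = i + m from rfl] at hi
        rw [hi]
    · rintro w1 ⟨i1, -, rfl⟩ w2 ⟨i2, -, rfl⟩ he
      exact enc_inj _ _ (by rw [tmFactor_length, tmFactor_length]) he
  calc gc (m+1) ≤ {x : ℕ | x ∈ L.filter p}.ncard := hle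
    _ = (L.filter p).toFinset.card := by
        rw [← Set.ncard_coe_finset]
        congr 1
        ext x
        simp
    _ ≤ (L.filter p).length := (L.filter p).toFinset_card_le


def L13 : List Nat := [2454, 5323, 6757, 3378, 5785, 2892, 1446, 4819, 2409, 5300, 6746, 3373, 1686, 4939, 6565, 3282, 5737, 2868, 1434, 4813, 6502, 3251, 1625, 4908, 1689, 4940, 6566, 3283, 2406, 5299, 6745, 3372, 5782, 2891, 1445, 4818, 6505, 3252, 1626, 4909]
lemma mem13 : ∀ j, j ≤ 175 → (tmCode 10 / 2^j) % 2^13 ∈ L13 := by decide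
lemma qb13 : qc 13 ≤ 16 := by
  have h := base_q 13 175 L13 (by norm_num) (by norm_num [covW]) (by norm_num) mem13
  have hl : (L13.filter (fun x => decide (¬ (x % 2 = x / 2^(13-1))))).length = 16 := by decide
  exact le_of_le_of_eq h hl
lemma gb13 : gc 13 ≤ 24 := by
  have h := base_g 13 175 L13 (by norm_num) (by norm_num [covW]) (by norm_num) mem13
  have hl : (L13.filter (fun x => decide (x % 2 = x / 2^(13-1)))).length = 24 := by decide
  exact le_of_le_of_eq h hl

def L14 : List Nat := [10646, 13515, 6757, 11570, 5785, 2892, 9638, 4819, 10601, 13492, 6746, 3373, 9878, 13131, 6565, 11474, 5737, 2868, 9626, 13005, 6502, 3251, 9817, 4908, 3378, 9881, 13132, 6566, 11475, 4813, 10598, 13491, 6745, 11564, 5782, 2891, 9637, 13010, 6505, 3252, 9818, 4909]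
lemma mem14 : ∀ j, j ≤ 191 → (tmCode 10 / 2^j) % 2^14 ∈ L14 := by decide
lemma qb14 : qc 14 ≤ 24 := by
  have h := base_q 14 191 L14 (by norm_num) (by norm_num [covW]) (by norm_num) mem14
  have hl : (L14.filter (fun x => decide (¬ (x % 2 = x / 2^(14-1))))).length = 24 := by decide
  exact le_of_le_of_eq h hl
lemma gb14 : gc 14 ≤ 18 := by
  have h := base_g 14 191 L14 (by norm_num) (by norm_num [covW]) (by norm_num) mem14
  have hl : (L14.filter (fun x => decide (x % 2 = x / 2^(14-1)))).length = 18 := by decide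
  exact le_of_le_of_eq h hl

def L15 : List Nat := [27030, 13515, 23141, 11570, 5785, 19276, 9638, 21203, 26985, 13492, 6746, 19757, 26262, 13131, 22949, 11474, 5737, 19252, 26010, 13005, 6502, 19635, 9817, 21292, 6757, 19762, 26265, 13132, 22950, 11475, 9626, 21197, 26982, 13491, 23129, 11564, 5782, 19275, 26021, 13010, 6505, 19636, 9818, 21293]
lemma mem15 : ∀ j, j ≤ 207 → (tmCode 10 / 2^j) % 2^15 ∈ L15 := by decide
lemma qb15 : qc 15 ≤ 20 := by
  have h := base_q 15 207 L15 (by norm_num) (by norm_num [covW]) (by norm_num) mem15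
  have hl : (L15.filter (fun x => decide (¬ (x % 2 = x / 2^(15-1))))).length = 20 := by decide
  exact le_of_le_of_eq h hl
lemma gb15 : gc 15 ≤ 24 := by
  have h := base_g 15 207 L15 (by norm_num) (by norm_num [covW]) (by norm_num) mem15
  have hl : (L15.filter (fun x => decide (x % 2 = x / 2^(15-1)))).length = 24 := by decide
  exact le_of_le_of_eq h hl

def L16 : List Nat := [27030, 46283, 23141, 11570, 38553, 19276, 42406, 53971, 26985, 13492, 39514, 52525, 26262, 45899, 22949, 11474, 38505, 52020, 26010, 13005, 39270, 19635, 42585, 54060, 13515, 39525, 52530, 26265, 45900, 22950, 11475, 19252, 42394, 53965, 26982, 46259, 23129, 11564, 38550, 52043, 26021, 13010, 39273, 19636, 42586, 54061]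
lemma mem16 : ∀ j, j ≤ 223 → (tmCode 10 / 2^j) % 2^16 ∈ L16 := by decide
lemma qb16 : qc 16 ≤ 20 := by
  have h := base_q 16 223 L16 (by norm_num) (by norm_num [covW]) (by norm_num) mem16
  have hl : (L16.filter (fun x => decide (¬ (x % 2 = x / 2^(16-1))))).length = 20 := by decide
  exact le_of_le_of_eq h hl
lemma gb16 : gc 16 ≤ 26 := by
  have h := base_g 16 223 L16 (by norm_num) (by norm_num [covW]) (by norm_num) mem16
  have hl : (L16.filter (fun x => decide (x % 2 = x / 2^(16-1)))).length = 26 := by decide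
  exact le_of_le_of_eq h hl

def L17 : List Nat := [92566, 46283, 23141, 77106, 38553, 84812, 107942, 53971, 26985, 79028, 105050, 52525, 91798, 45899, 22949, 77010, 104041, 52020, 26010, 78541, 39270, 85171, 108121, 54060, 27030, 79051, 105061, 52530, 91801, 45900, 22950, 77011, 38505, 84788, 107930, 53965, 92518, 46259, 23129, 77100, 104086, 52043, 26021, 78546, 39273, 85172, 108122, 54061]
lemma mem17 : ∀ j, j ≤ 239 → (tmCode 10 / 2^j) % 2^17 ∈ L17 := by decide
lemma qb17 : qc 17 ≤ 32 := by
  have h := base_q 17 239 L17 (by norm_num) (by norm_num [covW]) (by norm_num) mem17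
  have hl : (L17.filter (fun x => decide (¬ (x % 2 = x / 2^(17-1))))).length = 32 := by decide
  exact le_of_le_of_eq h hl
lemma gb17 : gc 17 ≤ 16 := by
  have h := base_g 17 239 L17 (by norm_num) (by norm_num [covW]) (by norm_num) mem17
  have hl : (L17.filter (fun x => decide (x % 2 = x / 2^(17-1)))).length = 16 := by decide
  exact le_of_le_of_eq h hl

def L18 : List Nat := [92566, 46283, 154213, 77106, 169625, 215884, 107942, 53971, 158057, 210100, 105050, 183597, 91798, 45899, 154021, 208082, 104041, 52020, 157082, 78541, 170342, 216243, 108121, 54060, 158102, 210123, 105061, 183602, 91801, 45900, 154022, 77011, 169577, 215860, 107930, 185037, 92518, 46259, 154201, 208172, 104086, 52043, 157093, 78546, 170345, 216244, 108122, 185133, 77010, 54061, 208083, 185132]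
lemma mem18 : ∀ j, j ≤ 255 → (tmCode 10 / 2^j) % 2^18 ∈ L18 := by decide
lemma qb18 : qc 18 ≤ 24 := by
  have h := base_q 18 255 L18 (by norm_num) (by norm_num [covW]) (by norm_num) mem18
  have hl : (L18.filter (fun x => decide (¬ (x % 2 = x / 2^(18-1))))).length = 24 := by decide
  exact le_of_le_of_eq h hl
lemma gb18 : gc 18 ≤ 28 := by
  have h := base_g 18 255 L18 (by norm_num) (by norm_num [covW]) (by norm_num) mem18
  have hl : (L18.filter (fun x => decide (x % 2 = x / 2^(18-1)))).length = 28 := by decide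
  exact le_of_le_of_eq h hl

def L19 : List Nat := [92566, 308427, 154213, 339250, 431769, 215884, 107942, 316115, 420201, 210100, 367194, 183597, 91798, 308043, 416165, 208082, 104041, 314164, 157082, 340685, 432486, 216243, 108121, 316204, 420246, 210123, 367205, 183602, 91801, 308044, 154022, 339155, 431721, 215860, 370074, 185037, 92518, 308403, 416345, 208172, 104086, 314187, 157093, 340690, 432489, 216244, 370266, 185133, 154021, 339154, 108122, 316205, 416166, 208083, 370265, 185132]
lemma mem19 : ∀ j, j ≤ 271 → (tmCode 10 / 2^j) % 2^19 ∈ L19 := by decide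
lemma qb19 : qc 19 ≤ 24 := by
  have h := base_q 19 271 L19 (by norm_num) (by norm_num [covW]) (by norm_num) mem19
  have hl : (L19.filter (fun x => decide (¬ (x % 2 = x / 2^(19-1))))).length = 24 := by decide
  exact le_of_le_of_eq h hl
lemma gb19 : gc 19 ≤ 32 := by
  have h := base_g 19 271 L19 (by norm_num) (by norm_num [covW]) (by norm_num) mem19
  have hl : (L19.filter (fun x => decide (x % 2 = x / 2^(19-1)))).length = 32 := by decide
  exact le_of_le_of_eq h hl

def L20 : List Nat := [616854, 308427, 678501, 863538, 431769, 215884, 632230, 840403, 420201, 734388, 367194, 183597, 616086, 832331, 416165, 208082, 628329, 314164, 681370, 864973, 432486, 216243, 632409, 840492, 420246, 734411, 367205, 183602, 616089, 308044, 678310, 863443, 431721, 740148, 370074, 185037, 616806, 832691, 416345, 208172, 628374, 314187, 681381, 864978, 432489, 740532, 370266, 185133, 308043, 678309, 863442, 216244, 632410, 840493, 832332, 416166, 208083, 740531, 370265, 185132]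
lemma mem20 : ∀ j, j ≤ 287 → (tmCode 10 / 2^j) % 2^20 ∈ L20 := by decide
lemma qb20 : qc 20 ≤ 32 := by
  have h := base_q 20 287 L20 (by norm_num) (by norm_num [covW]) (by norm_num) mem20
  have hl : (L20.filter (fun x => decide (¬ (x % 2 = x / 2^(20-1))))).length = 32 := by decide
  exact le_of_le_of_eq h hl
lemma gb20 : gc 20 ≤ 28 := by
  have h := base_g 20 287 L20 (by norm_num) (by norm_num [covW]) (by norm_num) mem20
  have hl : (L20.filter (fun x => decide (x % 2 = x / 2^(20-1)))).length = 28 := by decide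
  exact le_of_le_of_eq h hl

def L21 : List Nat := [616854, 1357003, 1727077, 863538, 431769, 1264460, 1680806, 840403, 1468777, 734388, 367194, 1232173, 1664662, 832331, 416165, 1256658, 628329, 1362740, 1729946, 864973, 432486, 1264819, 1680985, 840492, 1468822, 734411, 367205, 1232178, 616089, 1356620, 1726886, 863443, 1480297, 740148, 370074, 1233613, 1665382, 832691, 416345, 1256748, 628374, 1362763, 1729957, 864978, 1481065, 740532, 370266, 1233709, 616086, 1356619, 1726885, 863442, 432489, 1264820, 1680986, 840493, 1664665, 832332, 416166, 1256659, 1481062, 740531, 370265, 1233708]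
lemma mem21 : ∀ j, j ≤ 303 → (tmCode 10 / 2^j) % 2^21 ∈ L21 := by decide
lemma qb21 : qc 21 ≤ 32 := by
  have h := base_q 21 303 L21 (by norm_num) (by norm_num [covW]) (by norm_num) mem21
  have hl : (L21.filter (fun x => decide (¬ (x % 2 = x / 2^(21-1))))).length = 32 := by decide
  exact le_of_le_of_eq h hl
lemma gb21 : gc 21 ≤ 32 := by
  have h := base_g 21 303 L21 (by norm_num) (by norm_num [covW]) (by norm_num) mem21
  have hl : (L21.filter (fun x => decide (x % 2 = x / 2^(21-1)))).length = 32 := by decide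
  exact le_of_le_of_eq h hl

def L22 : List Nat := [2714006, 3454155, 1727077, 863538, 2528921, 3361612, 1680806, 2937555, 1468777, 734388, 2464346, 3329325, 1664662, 832331, 2513317, 1256658, 2725481, 3459892, 1729946, 864973, 2529638, 3361971, 1680985, 2937644, 1468822, 734411, 2464357, 1232178, 2713241, 3453772, 1726886, 2960595, 1480297, 740148, 2467226, 3330765, 1665382, 832691, 2513497, 1256748, 2725526, 3459915, 1729957, 2962130, 1481065, 740532, 2467418, 1233709, 1232173, 2713238, 3453771, 1726885, 2960594, 864978, 2529641, 3361972, 1680986, 2937645, 3329330, 1664665, 832332, 2513318, 1256659, 2962125, 1481062, 740531, 2467417, 1233708]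
lemma mem22 : ∀ j, j ≤ 319 → (tmCode 10 / 2^j) % 2^22 ∈ L22 := by decide
lemma qb22 : qc 22 ≤ 32 := by
  have h := base_q 22 319 L22 (by norm_num) (by norm_num [covW]) (by norm_num) mem22
  have hl : (L22.filter (fun x => decide (¬ (x % 2 = x / 2^(22-1))))).length = 32 := by decide
  exact le_of_le_of_eq h hl
lemma gb22 : gc 22 ≤ 36 := by
  have h := base_g 22 319 L22 (by norm_num) (by norm_num [covW]) (by norm_num) mem22
  have hl : (L22.filter (fun x => decide (x % 2 = x / 2^(22-1)))).length = 36 := by decide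
  exact le_of_le_of_eq h hl

def L23 : List Nat := [6908310, 3454155, 1727077, 5057842, 6723225, 3361612, 5875110, 2937555, 1468777, 4928692, 6658650, 3329325, 1664662, 5026635, 2513317, 5450962, 6919785, 3459892, 1729946, 5059277, 6723942, 3361971, 5875289, 2937644, 1468822, 4928715, 2464357, 5426482, 6907545, 3453772, 5921190, 2960595, 1480297, 4934452, 6661530, 3330765, 1665382, 5026995, 2513497, 5451052, 6919830, 3459915, 5924261, 2962130, 1481065, 4934836, 2467418, 5428013, 2464346, 5426477, 6907542, 3453771, 5921189, 2960594, 1729957, 5059282, 6723945, 3361972, 5875290, 2937645, 6658661, 3329330, 1664665, 5026636, 2513318, 5450963, 5924250, 2962125, 1481062, 4934835, 2467417, 5428012]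
lemma mem23 : ∀ j, j ≤ 335 → (tmCode 10 / 2^j) % 2^23 ∈ L23 := by decide
lemma qb23 : qc 23 ≤ 40 := by
  have h := base_q 23 335 L23 (by norm_num) (by norm_num [covW]) (by norm_num) mem23
  have hl : (L23.filter (fun x => decide (¬ (x % 2 = x / 2^(23-1))))).length = 40 := by decide
  exact le_of_le_of_eq h hl
lemma gb23 : gc 23 ≤ 32 := by
  have h := base_g 23 335 L23 (by norm_num) (by norm_num [covW]) (by norm_num) mem23
  have hl : (L23.filter (fun x => decide (x % 2 = x / 2^(23-1)))).length = 32 := by decide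
  exact le_of_le_of_eq h hl

def L24 : List Nat := [6908310, 3454155, 10115685, 13446450, 6723225, 11750220, 5875110, 2937555, 9857385, 13317300, 6658650, 3329325, 10053270, 5026635, 10901925, 13839570, 6919785, 3459892, 10118554, 13447885, 6723942, 11750579, 5875289, 2937644, 9857430, 4928715, 10852965, 13815090, 6907545, 11842380, 5921190, 2960595, 9868905, 13323060, 6661530, 3330765, 10053990, 5026995, 10902105, 13839660, 6919830, 11848523, 5924261, 2962130, 9869673, 4934836, 10856026, 13816621, 4928692, 10852954, 13815085, 6907542, 11842379, 5921189, 2960594, 3459915, 10118565, 13447890, 6723945, 11750580, 5875290, 2937645, 13317323, 6658661, 3329330, 10053273, 5026636, 10901926, 13839571, 11848500, 5924250, 2962125, 9869670, 4934835, 10856025, 13816620]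
lemma mem24 : ∀ j, j ≤ 351 → (tmCode 10 / 2^j) % 2^24 ∈ L24 := by decide
lemma qb24 : qc 24 ≤ 40 := by
  have h := base_q 24 351 L24 (by norm_num) (by norm_num [covW]) (by norm_num) mem24
  have hl : (L24.filter (fun x => decide (¬ (x % 2 = x / 2^(24-1))))).length = 40 := by decide
  exact le_of_le_of_eq h hl
lemma gb24 : gc 24 ≤ 36 := by
  have h := base_g 24 351 L24 (by norm_num) (by norm_num [covW]) (by norm_num) mem24
  have hl : (L24.filter (fun x => decide (x % 2 = x / 2^(24-1)))).length = 36 := by decide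
  exact le_of_le_of_eq h hl

def L25 : List Nat := [6908310, 20231371, 26892901, 13446450, 23500441, 11750220, 5875110, 19714771, 26634601, 13317300, 6658650, 20106541, 10053270, 21803851, 27679141, 13839570, 6919785, 20237108, 26895770, 13447885, 23501158, 11750579, 5875289, 19714860, 9857430, 21705931, 27630181, 13815090, 23684761, 11842380, 5921190, 19737811, 26646121, 13323060, 6661530, 20107981, 10053990, 21804211, 27679321, 13839660, 23697046, 11848523, 5924261, 19739346, 9869673, 21712052, 27633242, 13816621, 9857385, 21705908, 27630170, 13815085, 23684758, 11842379, 5921189, 19737810, 6919830, 20237131, 26895781, 13447890, 23501161, 11750580, 5875290, 19714861, 26634646, 13317323, 6658661, 20106546, 10053273, 21803852, 27679142, 13839571, 23697001, 11848500, 5924250, 19739341, 9869670, 21712051, 27633241, 13816620]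
lemma mem25 : ∀ j, j ≤ 367 → (tmCode 10 / 2^j) % 2^25 ∈ L25 := by decide
lemma qb25 : qc 25 ≤ 32 := by
  have h := base_q 25 367 L25 (by norm_num) (by norm_num [covW]) (by norm_num) mem25
  have hl : (L25.filter (fun x => decide (¬ (x % 2 = x / 2^(25-1))))).length = 32 := by decide
  exact le_of_le_of_eq h hl
lemma gb25 : gc 25 ≤ 48 := by
  have h := base_g 25 367 L25 (by norm_num) (by norm_num [covW]) (by norm_num) mem25
  have hl : (L25.filter (fun x => decide (x % 2 = x / 2^(25-1)))).length = 48 := by decide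
  exact le_of_le_of_eq h hl

def L26 : List Nat := [40462742, 53785803, 26892901, 47000882, 23500441, 11750220, 39429542, 53269203, 26634601, 13317300, 40213082, 20106541, 43607702, 55358283, 27679141, 13839570, 40474217, 53791540, 26895770, 47002317, 23501158, 11750579, 39429721, 19714860, 43411862, 55260363, 27630181, 47369522, 23684761, 11842380, 39475622, 53292243, 26646121, 13323060, 40215962, 20107981, 43608422, 55358643, 27679321, 47394092, 23697046, 11848523, 39478693, 19739346, 43424105, 55266484, 27633242, 13816621, 19714771, 43411817, 55260340, 27630170, 47369517, 23684758, 11842379, 39475621, 53292242, 13839660, 40474262, 53791563, 26895781, 47002322, 23501161, 11750580, 39429722, 53269293, 26634646, 13317323, 40213093, 20106546, 43607705, 55358284, 27679142, 47394003, 23697001, 11848500, 39478682, 19739341, 43424102, 55266483, 27633241, 13816620]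
lemma mem26 : ∀ j, j ≤ 383 → (tmCode 10 / 2^j) % 2^26 ∈ L26 := by decide
lemma qb26 : qc 26 ≤ 42 := by
  have h := base_q 26 383 L26 (by norm_num) (by norm_num [covW]) (by norm_num) mem26
  have hl : (L26.filter (fun x => decide (¬ (x % 2 = x / 2^(26-1))))).length = 42 := by decide
  exact le_of_le_of_eq h hl
lemma gb26 : gc 26 ≤ 40 := by
  have h := base_g 26 383 L26 (by norm_num) (by norm_num [covW]) (by norm_num) mem26
  have hl : (L26.filter (fun x => decide (x % 2 = x / 2^(26-1)))).length = 40 := by decide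
  exact le_of_le_of_eq h hl

def L27 : List Nat := [107571606, 53785803, 94001765, 47000882, 23500441, 78859084, 106538406, 53269203, 26634601, 80426164, 40213082, 87215405, 110716566, 55358283, 27679141, 80948434, 107583081, 53791540, 94004634, 47002317, 23501158, 78859443, 39429721, 86823724, 110520726, 55260363, 94739045, 47369522, 23684761, 78951244, 106584486, 53292243, 26646121, 80431924, 40215962, 87216845, 110717286, 55358643, 94788185, 47394092, 23697046, 78957387, 39478693, 86848210, 110532969, 55266484, 27633242, 80925485, 39429542, 86823635, 110520681, 55260340, 94739034, 47369517, 23684758, 78951243, 106584485, 53292242, 27679321, 80948524, 107583126, 53791563, 94004645, 47002322, 23501161, 78859444, 106538586, 53269293, 26634646, 80426187, 40213093, 87215410, 110716569, 55358284, 94788006, 47394003, 23697001, 78957364, 39478682, 86848205, 110532966, 55266483, 27633241, 80925484]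
lemma mem27 : ∀ j, j ≤ 399 → (tmCode 10 / 2^j) % 2^27 ∈ L27 := by decide
lemma qb27 : qc 27 ≤ 48 := by
  have h := base_q 27 399 L27 (by norm_num) (by norm_num [covW]) (by norm_num) mem27
  have hl : (L27.filter (fun x => decide (¬ (x % 2 = x / 2^(27-1))))).length = 48 := by decide
  exact le_of_le_of_eq h hl
lemma gb27 : gc 27 ≤ 36 := by
  have h := base_g 27 399 L27 (by norm_num) (by norm_num [covW]) (by norm_num) mem27
  have hl : (L27.filter (fun x => decide (x % 2 = x / 2^(27-1)))).length = 36 := by decide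
  exact le_of_le_of_eq h hl

def L28 : List Nat := [107571606, 188003531, 94001765, 47000882, 157718169, 213076812, 106538406, 53269203, 160852329, 80426164, 174430810, 221433133, 110716566, 55358283, 161896869, 215166162, 107583081, 188009268, 94004634, 47002317, 157718886, 78859443, 173647449, 221041452, 110520726, 189478091, 94739045, 47369522, 157902489, 213168972, 106584486, 53292243, 160863849, 80431924, 174433690, 221434573, 110717286, 189576371, 94788185, 47394092, 157914774, 78957387, 173696421, 221065938, 110532969, 55266484, 161850970, 215143213, 78859084, 173647270, 221041363, 110520681, 189478068, 94739034, 47369517, 157902486, 213168971, 106584485, 53292242, 55358643, 161897049, 215166252, 107583126, 188009291, 94004645, 47002322, 157718889, 213077172, 106538586, 53269293, 160852374, 80426187, 174430821, 221433138, 110716569, 189576012, 94788006, 47394003, 157914729, 78957364, 173696410, 221065933, 110532966, 55266483, 161850969, 215143212]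
lemma mem28 : ∀ j, j ≤ 415 → (tmCode 10 / 2^j) % 2^28 ∈ L28 := by decide
lemma qb28 : qc 28 ≤ 42 := by
  have h := base_q 28 415 L28 (by norm_num) (by norm_num [covW]) (by norm_num) mem28
  have hl : (L28.filter (fun x => decide (¬ (x % 2 = x / 2^(28-1))))).length = 42 := by decide
  exact le_of_le_of_eq h hl
lemma gb28 : gc 28 ≤ 44 := by
  have h := base_g 28 415 L28 (by norm_num) (by norm_num [covW]) (by norm_num) mem28
  have hl : (L28.filter (fun x => decide (x % 2 = x / 2^(28-1)))).length = 44 := by decide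
  exact le_of_le_of_eq h hl


lemma qd28 : qc 28 ≤ 42 := by
  have h := q_even 14 (by norm_num)
  norm_num at h
  have h1 := gb14; have h2 := gb15; omega
lemma gd28 : gc 28 ≤ 44 := by
  have h := g_even 14 (by norm_num)
  norm_num at h
  have h1 := qb14; have h2 := qb15; omega

lemma qd29 : qc 29 ≤ 40 := by
  have h := q_odd 14
  norm_num at h
  have h1 := qb15; omega
lemma gd29 : gc 29 ≤ 48 := by
  have h := g_odd 14
  norm_num at h
  have h1 := gb15; omega

lemma qd30 : qc 30 ≤ 50 := by
  have h := q_even 15 (by norm_num)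
  norm_num at h
  have h1 := gb15; have h2 := gb16; omega
lemma gd30 : gc 30 ≤ 40 := by
  have h := g_even 15 (by norm_num)
  norm_num at h
  have h1 := qb15; have h2 := qb16; omega

lemma qd31 : qc 31 ≤ 40 := by
  have h := q_odd 15
  norm_num at h
  have h1 := qb16; omega
lemma gd31 : gc 31 ≤ 52 := by
  have h := g_odd 15
  norm_num at h
  have h1 := gb16; omega

lemma qd32 : qc 32 ≤ 42 := by
  have h := q_even 16 (by norm_num)
  norm_num at h
  have h1 := gb16; have h2 := gb17; omega
lemma gd32 : gc 32 ≤ 52 := by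
  have h := g_even 16 (by norm_num)
  norm_num at h
  have h1 := qb16; have h2 := qb17; omega

lemma qd33 : qc 33 ≤ 64 := by
  have h := q_odd 16
  norm_num at h
  have h1 := qb17; omega
lemma gd33 : gc 33 ≤ 32 := by
  have h := g_odd 16
  norm_num at h
  have h1 := gb17; omega

lemma qd34 : qc 34 ≤ 44 := by
  have h := q_even 17 (by norm_num)
  norm_num at h
  have h1 := gb17; have h2 := gb18; omega
lemma gd34 : gc 34 ≤ 56 := by
  have h := g_even 17 (by norm_num)
  norm_num at h
  have h1 := qb17; have h2 := qb18; omega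

lemma qd35 : qc 35 ≤ 48 := by
  have h := q_odd 17
  norm_num at h
  have h1 := qb18; omega
lemma gd35 : gc 35 ≤ 56 := by
  have h := g_odd 17
  norm_num at h
  have h1 := gb18; omega

lemma qd36 : qc 36 ≤ 60 := by
  have h := q_even 18 (by norm_num)
  norm_num at h
  have h1 := gb18; have h2 := gb19; omega
lemma gd36 : gc 36 ≤ 48 := by
  have h := g_even 18 (by norm_num)
  norm_num at h
  have h1 := qb18; have h2 := qb19; omega

lemma qd37 : qc 37 ≤ 48 := by
  have h := q_odd 18
  norm_num at h
  have h1 := qb19; omega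
lemma gd37 : gc 37 ≤ 64 := by
  have h := g_odd 18
  norm_num at h
  have h1 := gb19; omega

lemma qd38 : qc 38 ≤ 60 := by
  have h := q_even 19 (by norm_num)
  norm_num at h
  have h1 := gb19; have h2 := gb20; omega
lemma gd38 : gc 38 ≤ 56 := by
  have h := g_even 19 (by norm_num)
  norm_num at h
  have h1 := qb19; have h2 := qb20; omega

lemma qd39 : qc 39 ≤ 64 := by
  have h := q_odd 19
  norm_num at h
  have h1 := qb20; omega
lemma gd39 : gc 39 ≤ 56 := by
  have h := g_odd 19
  norm_num at h
  have h1 := gb20; omega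

lemma qd40 : qc 40 ≤ 60 := by
  have h := q_even 20 (by norm_num)
  norm_num at h
  have h1 := gb20; have h2 := gb21; omega
lemma gd40 : gc 40 ≤ 64 := by
  have h := g_even 20 (by norm_num)
  norm_num at h
  have h1 := qb20; have h2 := qb21; omega

lemma qd41 : qc 41 ≤ 64 := by
  have h := q_odd 20
  norm_num at h
  have h1 := qb21; omega
lemma gd41 : gc 41 ≤ 64 := by
  have h := g_odd 20
  norm_num at h
  have h1 := gb21; omega

lemma qd42 : qc 42 ≤ 68 := by
  have h := q_even 21 (by norm_num)
  norm_num at h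
  have h1 := gb21; have h2 := gb22; omega
lemma gd42 : gc 42 ≤ 64 := by
  have h := g_even 21 (by norm_num)
  norm_num at h
  have h1 := qb21; have h2 := qb22; omega

lemma qd43 : qc 43 ≤ 64 := by
  have h := q_odd 21
  norm_num at h
  have h1 := qb22; omega
lemma gd43 : gc 43 ≤ 72 := by
  have h := g_odd 21
  norm_num at h
  have h1 := gb22; omega

lemma qd44 : qc 44 ≤ 68 := by
  have h := q_even 22 (by norm_num)
  norm_num at h
  have h1 := gb22; have h2 := gb23; omega
lemma gd44 : gc 44 ≤ 72 := by
  have h := g_even 22 (by norm_num)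
  norm_num at h
  have h1 := qb22; have h2 := qb23; omega

lemma qd45 : qc 45 ≤ 80 := by
  have h := q_odd 22
  norm_num at h
  have h1 := qb23; omega
lemma gd45 : gc 45 ≤ 64 := by
  have h := g_odd 22
  norm_num at h
  have h1 := gb23; omega

lemma qd46 : qc 46 ≤ 68 := by
  have h := q_even 23 (by norm_num)
  norm_num at h
  have h1 := gb23; have h2 := gb24; omega
lemma gd46 : gc 46 ≤ 80 := by
  have h := g_even 23 (by norm_num)
  norm_num at h
  have h1 := qb23; have h2 := qb24; omega

lemma qd47 : qc 47 ≤ 80 := by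
  have h := q_odd 23
  norm_num at h
  have h1 := qb24; omega
lemma gd47 : gc 47 ≤ 72 := by
  have h := g_odd 23
  norm_num at h
  have h1 := gb24; omega

lemma qd48 : qc 48 ≤ 84 := by
  have h := q_even 24 (by norm_num)
  norm_num at h
  have h1 := gb24; have h2 := gb25; omega
lemma gd48 : gc 48 ≤ 72 := by
  have h := g_even 24 (by norm_num)
  norm_num at h
  have h1 := qb24; have h2 := qb25; omega

lemma qd49 : qc 49 ≤ 64 := by
  have h := q_odd 24
  norm_num at h
  have h1 := qb25; omega
lemma gd49 : gc 49 ≤ 96 := by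
  have h := g_odd 24
  norm_num at h
  have h1 := gb25; omega

lemma qd50 : qc 50 ≤ 88 := by
  have h := q_even 25 (by norm_num)
  norm_num at h
  have h1 := gb25; have h2 := gb26; omega
lemma gd50 : gc 50 ≤ 74 := by
  have h := g_even 25 (by norm_num)
  norm_num at h
  have h1 := qb25; have h2 := qb26; omega

lemma qd51 : qc 51 ≤ 84 := by
  have h := q_odd 25
  norm_num at h
  have h1 := qb26; omega
lemma gd51 : gc 51 ≤ 80 := by
  have h := g_odd 25
  norm_num at h
  have h1 := gb26; omega

lemma qd52 : qc 52 ≤ 76 := by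
  have h := q_even 26 (by norm_num)
  norm_num at h
  have h1 := gb26; have h2 := gb27; omega
lemma gd52 : gc 52 ≤ 90 := by
  have h := g_even 26 (by norm_num)
  norm_num at h
  have h1 := qb26; have h2 := qb27; omega

lemma qd53 : qc 53 ≤ 96 := by
  have h := q_odd 26
  norm_num at h
  have h1 := qb27; omega
lemma gd53 : gc 53 ≤ 72 := by
  have h := g_odd 26
  norm_num at h
  have h1 := gb27; omega

lemma qd54 : qc 54 ≤ 80 := by
  have h := q_even 27 (by norm_num)
  norm_num at h
  have h1 := gb27; have h2 := gb28; omega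
lemma gd54 : gc 54 ≤ 90 := by
  have h := g_even 27 (by norm_num)
  norm_num at h
  have h1 := qb27; have h2 := qb28; omega

lemma qd55 : qc 55 ≤ 84 := by
  have h := q_odd 27
  norm_num at h
  have h1 := qb28; omega
lemma gd55 : gc 55 ≤ 88 := by
  have h := g_odd 27
  norm_num at h
  have h1 := gb28; omega



def notPow1 (k : ℕ) : Prop := ∀ j : ℕ, k ≠ 2^j + 1
def not3Pow1 (k : ℕ) : Prop := ∀ j : ℕ, k ≠ 3*2^j + 1

lemma pow2_ge (j : ℕ) : j + 1 ≤ 2^j := (Nat.lt_two_pow_self (n := j))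

lemma invariant : ∀ k, 28 ≤ k →
    (qc k ≤ 2*k-2) ∧ (gc k ≤ 2*k-2) ∧
    (notPow1 k → qc k ≤ 2*k-9) ∧ (not3Pow1 k → gc k ≤ 2*k-9) := by
  intro k
  induction k using Nat.strong_induction_on with
  | _ k ih =>
    intro hk
    rcases Nat.lt_or_ge k 56 with h56 | h56
    · interval_cases k
      · exact ⟨by have := qd28; omega, by have := gd28; omega, fun _ => by have := qd28; omega, fun _ => by have := gd28; omega⟩
      · exact ⟨by have := qd29; omega, by have := gd29; omega, fun _ => by have := qd29; omega, fun _ => by have := gd29; omega⟩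
      · exact ⟨by have := qd30; omega, by have := gd30; omega, fun _ => by have := qd30; omega, fun _ => by have := gd30; omega⟩
      · exact ⟨by have := qd31; omega, by have := gd31; omega, fun _ => by have := qd31; omega, fun _ => by have := gd31; omega⟩
      · exact ⟨by have := qd32; omega, by have := gd32; omega, fun _ => by have := qd32; omega, fun _ => by have := gd32; omega⟩
      · exact ⟨by have := qd33; omega, by have := gd33; omega, fun h => absurd (by norm_num : (33:ℕ) = 2^5+1) (h 5), fun _ => by have := gd33; omega⟩
      · exact ⟨by have := qd34; omega, by have := gd34; omega, fun _ => by have := qd34; omega, fun _ => by have := gd34; omega⟩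
      · exact ⟨by have := qd35; omega, by have := gd35; omega, fun _ => by have := qd35; omega, fun _ => by have := gd35; omega⟩
      · exact ⟨by have := qd36; omega, by have := gd36; omega, fun _ => by have := qd36; omega, fun _ => by have := gd36; omega⟩
      · exact ⟨by have := qd37; omega, by have := gd37; omega, fun _ => by have := qd37; omega, fun _ => by have := gd37; omega⟩
      · exact ⟨by have := qd38; omega, by have := gd38; omega, fun _ => by have := qd38; omega, fun _ => by have := gd38; omega⟩
      · exact ⟨by have := qd39; omega, by have := gd39; omega, fun _ => by have := qd39; omega, fun _ => by have := gd39; omega⟩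
      · exact ⟨by have := qd40; omega, by have := gd40; omega, fun _ => by have := qd40; omega, fun _ => by have := gd40; omega⟩
      · exact ⟨by have := qd41; omega, by have := gd41; omega, fun _ => by have := qd41; omega, fun _ => by have := gd41; omega⟩
      · exact ⟨by have := qd42; omega, by have := gd42; omega, fun _ => by have := qd42; omega, fun _ => by have := gd42; omega⟩
      · exact ⟨by have := qd43; omega, by have := gd43; omega, fun _ => by have := qd43; omega, fun _ => by have := gd43; omega⟩
      · exact ⟨by have := qd44; omega, by have := gd44; omega, fun _ => by have := qd44; omega, fun _ => by have := gd44; omega⟩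
      · exact ⟨by have := qd45; omega, by have := gd45; omega, fun _ => by have := qd45; omega, fun _ => by have := gd45; omega⟩
      · exact ⟨by have := qd46; omega, by have := gd46; omega, fun _ => by have := qd46; omega, fun _ => by have := gd46; omega⟩
      · exact ⟨by have := qd47; omega, by have := gd47; omega, fun _ => by have := qd47; omega, fun _ => by have := gd47; omega⟩
      · exact ⟨by have := qd48; omega, by have := gd48; omega, fun _ => by have := qd48; omega, fun _ => by have := gd48; omega⟩
      · exact ⟨by have := qd49; omega, by have := gd49; omega, fun _ => by have := qd49; omega, fun h => absurd (by norm_num : (49:ℕ) = 3*2^4+1) (h 4)⟩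
      · exact ⟨by have := qd50; omega, by have := gd50; omega, fun _ => by have := qd50; omega, fun _ => by have := gd50; omega⟩
      · exact ⟨by have := qd51; omega, by have := gd51; omega, fun _ => by have := qd51; omega, fun _ => by have := gd51; omega⟩
      · exact ⟨by have := qd52; omega, by have := gd52; omega, fun _ => by have := qd52; omega, fun _ => by have := gd52; omega⟩
      · exact ⟨by have := qd53; omega, by have := gd53; omega, fun _ => by have := qd53; omega, fun _ => by have := gd53; omega⟩
      · exact ⟨by have := qd54; omega, by have := gd54; omega, fun _ => by have := qd54; omega, fun _ => by have := gd54; omega⟩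
      · exact ⟨by have := qd55; omega, by have := gd55; omega, fun _ => by have := qd55; omega, fun _ => by have := gd55; omega⟩
    · -- k ≥ 56
      rcases Nat.even_or_odd k with ⟨c, hc⟩ | ⟨c, hc⟩
      · -- k = 2c
        have hc' : k = 2*c := by omega
        have hcb : 28 ≤ c := by omega
        obtain ⟨Q1, G1, Q1', G1'⟩ := ih c (by omega) hcb
        obtain ⟨Q2, G2, Q2', G2'⟩ := ih (c+1) (by omega) (by omega)
        have hq := q_even c (by omega)
        have hg := g_even c (by omega)
        rw [← hc'] at hq hg
        have hgg : gc c + gc (c+1) ≤ 2*k-9 := by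
          by_cases h3 : not3Pow1 c
          · have := G1' h3; omega
          · simp only [not3Pow1, not_forall, not_ne_iff] at h3
            obtain ⟨j, hj⟩ := h3
            have h3' : not3Pow1 (c+1) := by
              intro j' hj'
              rcases Nat.eq_zero_or_pos j' with rfl | hj'pos
              · omega
              · rcases Nat.eq_zero_or_pos j with rfl | hjpos
                · omega
                · obtain ⟨a, ha⟩ : ∃ a, j = a + 1 := ⟨j-1, by omega⟩
                  obtain ⟨b, hb⟩ : ∃ b, j' = b + 1 := ⟨j'-1, by omega⟩
                  rw [ha, pow_succ] at hj
                  rw [hb, pow_succ] at hj'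
                  omega
            have := G2' h3'; omega
        have hqq : qc c + qc (c+1) ≤ 2*k-9 := by
          by_cases h3 : notPow1 c
          · have := Q1' h3; omega
          · simp only [notPow1, not_forall, not_ne_iff] at h3
            obtain ⟨j, hj⟩ := h3
            have h3' : notPow1 (c+1) := by
              intro j' hj'
              rcases Nat.eq_zero_or_pos j' with rfl | hj'pos
              · omega
              · rcases Nat.eq_zero_or_pos j with rfl | hjpos
                · omega
                · obtain ⟨a, ha⟩ : ∃ a, j = a + 1 := ⟨j-1, by omega⟩
                  obtain ⟨b, hb⟩ : ∃ b, j' = b + 1 := ⟨j'-1, by omega⟩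
                  rw [ha, pow_succ] at hj
                  rw [hb, pow_succ] at hj'
                  omega
            have := Q2' h3'; omega
        exact ⟨by omega, by omega, fun _ => by omega, fun _ => by omega⟩
      · -- k = 2c+1
        have hc' : k = 2*c+1 := by omega
        have hcb : 28 ≤ c := by omega
        obtain ⟨Q2, G2, Q2', G2'⟩ := ih (c+1) (by omega) (by omega)
        have hq := q_odd c
        have hg := g_odd c
        rw [← hc'] at hq hg
        refine ⟨by omega, by omega, fun hnp => ?_, fun hnp => ?_⟩
        · have h3' : notPow1 (c+1) := by
            intro j hj
            apply hnp (j+1)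
            rw [pow_succ]
            omega
          have := Q2' h3'; omega
        · have h3' : not3Pow1 (c+1) := by
            intro j hj
            apply hnp (j+1)
            rw [pow_succ]
            omega
          have := G2' h3'; omega


lemma base_class (n W : ℕ) (Reps : List (List (Fin 2))) (RotL : List ℕ)
    (hn2 : 2 ≤ n) (hcw : covW n ≤ W) (hWn : W + n ≤ 1024)
    (hrot : RotL = Reps.flatMap (fun r => (List.range n).map (fun s => enc (r.rotate s))))
    (hlen : ∀ r ∈ Reps, r.length = n)
    (hmem : ∀ j, j ≤ W → (tmCode 10 / 2^j) % 2^n ∈ RotL) :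
    tmCyclicComplexity n ≤ Reps.length := by
  have hsub : {q : Quotient (List.IsRotated.setoid (Fin 2)) |
      ∃ i : ℕ, q = Quotient.mk (List.IsRotated.setoid (Fin 2)) (tmFactor i n)} ⊆
      (fun r => Quotient.mk (List.IsRotated.setoid (Fin 2)) r) '' {r | r ∈ Reps} := by
    rintro q ⟨i, rfl⟩
    obtain ⟨j, hj, hfac⟩ := cover n hn2 i
    have hcode : enc (tmFactor j n) ∈ RotL := by
      rw [codeFactor j n (by omega)]
      exact hmem j (by omega)
    rw [hrot, List.mem_flatMap] at hcode
    obtain ⟨r, hr, hcode⟩ := hcode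
    rw [List.mem_map] at hcode
    obtain ⟨s, hs, hcode⟩ := hcode
    have hleneq : (tmFactor j n).length = (r.rotate s).length := by
      rw [tmFactor_length, List.length_rotate, hlen r hr]
    have heq : tmFactor j n = r.rotate s := enc_inj _ _ hleneq hcode.symm
    refine ⟨r, hr, ?_⟩
    rw [← hfac, heq]
    exact (Quotient.sound ((List.IsRotated.forall r s)) : _ = _).symm
  calc tmCyclicComplexity n
      ≤ ((fun r => Quotient.mk (List.IsRotated.setoid (Fin 2)) r) '' {r | r ∈ Reps}).ncard :=
        Set.ncard_le_ncard hsub ((Reps.finite_toSet).image _)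
    _ ≤ {r | r ∈ Reps}.ncard := Set.ncard_image_le (Reps.finite_toSet)
    _ = Reps.toFinset.card := by
        rw [← Set.ncard_coe_finset]; congr 1; ext x; simp
    _ ≤ Reps.length := Reps.toFinset_card_le

def Reps13 : List (List (Fin 2)) := [[0, 0, 1, 0, 0, 1, 1, 0, 1, 0, 0, 1, 1], [0, 0, 1, 0, 1, 1, 1, 0, 1, 0, 0, 1, 1], [0, 0, 1, 0, 0, 1, 1, 0, 0, 1, 0, 1, 1], [0, 0, 1, 0, 1, 1, 0, 1, 1, 0, 0, 1, 1], [0, 0, 0, 1, 1, 0, 0, 1, 0, 1, 1, 0, 1], [0, 0, 1, 0, 1, 1, 0, 1, 0, 0, 1, 1, 1], [0, 0, 1, 0, 1, 0, 0, 1, 0, 1, 1, 0, 1], [0, 0, 1, 0, 1, 1, 0, 1, 0, 1, 1, 0, 1], [0, 0, 0, 1, 1, 0, 1, 0, 0, 1, 0, 1, 1], [0, 0, 1, 0, 1, 1, 0, 0, 1, 1, 1, 0, 1], [0, 0, 1, 0, 0, 1, 0, 1, 1, 0, 0, 1, 1], [0, 0, 1, 0, 1, 1, 0, 0, 1, 1,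 0, 1, 1], [0, 0, 0, 1, 0, 1, 1, 0, 0, 1, 1, 0, 1], [0, 0, 1, 1, 0, 1, 0, 0, 1, 1, 0, 1, 1], [0, 0, 1, 0, 0, 1, 1, 0, 0, 1, 1, 0, 1], [0, 0, 1, 0, 1, 1, 1, 0, 0, 1, 1, 0, 1], [0, 0, 0, 1, 0, 1, 1, 0, 1, 0, 0, 1, 1], [0, 0, 1, 1, 0, 0, 1, 1, 0, 1, 1, 0, 1]]
def Rot13 : List Nat := [6500, 3250, 1625, 4908, 2454, 1227, 4709, 6450, 3225, 5708, 2854, 1427, 4809, 6516, 3258, 1629, 4910, 2455, 5323, 6757, 7474, 3737, 5964, 2982, 1491, 4841, 6756, 3378, 1689, 4940, 2470, 1235, 4713, 6452, 3226, 1613, 4902, 2451, 5321, 6580, 3290, 1645, 4918, 2459, 5325, 6758, 3379, 5785, 6988, 3494, 1747, 4969, 5784, 2892, 1446, 723, 4457, 6324, 3162, 1581, 4886, 2443, 5317, 6754, 3377, 7348, 3674, 1837, 5014, 2507, 5349, 6770, 3385, 5788, 2894, 1447, 4819, 6505, 5780, 2890, 1445, 4818, 2409, 5300, 2650, 1325,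 4758, 2379, 5285, 6738, 3369, 5812, 2906, 1453, 4822, 2411, 5301, 6746, 3373, 5782, 2891, 5541, 6866, 3433, 6744, 3372, 1686, 843, 4517, 6354, 3177, 5684, 2842, 1421, 4806, 2403, 5297, 5940, 2970, 1485, 4838, 2419, 5305, 6748, 3374, 1687, 4939, 6565, 7378, 3689, 6564, 3282, 1641, 4916, 2458, 1229, 4710, 2355, 5273, 6732, 3366, 1683, 4937, 6964, 3482, 1741, 4966, 2483, 5337, 6764, 3382, 1691, 4941, 6566, 3283, 5737, 5736, 2868, 1434, 717, 4454, 2227, 5209, 6700, 3350, 1675, 4933, 6562, 3281, 6956, 3478, 1739, 4965, 6578, 3289, 5740, 2870, 1435, 4813, 6502, 3251, 5721, 5732, 2866, 1433, 4812, 2406, 1203, 4697, 6444, 3222, 1611, 4901, 6546, 3273, 5748, 2874, 1437, 4814, 2407, 5299, 6745, 7468, 3734, 1867, 5029, 6610, 3305, 6504, 3252, 1626, 813, 4502, 2251, 5221, 6706, 3353, 5772, 2886, 1443, 4817, 5836, 2918, 1459, 4825, 6508, 3254, 1627, 4909, 6550, 3275, 5733, 6962, 3481]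
lemma rotdef13 : Rot13 = Reps13.flatMap (fun r => (List.range 13).map (fun s => enc (r.rotate s))) := by decide
lemma replen13 : ∀ r ∈ Reps13, r.length = 13 := by decide
lemma cmem13 : ∀ j, j ≤ 175 → (tmCode 10 / 2^j) % 2^13 ∈ Rot13 := by decide
lemma cls13 : tmCyclicComplexity 13 ≤ 18 := by
  have h := base_class 13 175 Reps13 Rot13 (by norm_num) (by norm_num [covW]) (by norm_num)
    rotdef13 replen13 cmem13
  have hl : Reps13.length = 18 := by decide
  exact le_of_le_of_eq h hl

def Reps19 : List (List (Fin 2)) := [[0, 0, 0, 1, 1, 0, 1, 0, 0, 1, 1, 0, 0, 1, 0, 1, 1, 0, 1], [0, 0, 1, 0, 1, 1, 0, 1, 0, 0, 1, 1, 1, 0, 1, 0, 0, 1, 1], [0, 0, 1, 0, 1, 0, 1, 0, 0, 1, 1, 0, 0, 1, 0, 1, 1, 0, 1], [0, 0, 1, 0, 1, 1, 0, 1, 0, 0, 1, 0, 1, 1, 1, 0, 0, 1, 1], [0, 0, 0, 1, 1, 0, 0, 1, 0, 1, 1, 0, 1, 0, 0, 1, 0, 1, 1], [0, 0, 1, 0,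 1, 1, 0, 0, 1, 1, 1, 0, 0, 1, 0, 1, 1, 0, 1], [0, 0, 0, 1, 0, 1, 1, 0, 1, 0, 0, 1, 0, 1, 1, 0, 0, 1, 1], [0, 0, 1, 0, 1, 1, 0, 0, 1, 1, 0, 1, 0, 1, 0, 1, 1, 0, 1], [0, 0, 0, 1, 1, 0, 1, 0, 0, 1, 0, 1, 1, 0, 0, 1, 1, 0, 1], [0, 0, 1, 0, 1, 1, 0, 0, 1, 1, 0, 1, 0, 0, 1, 1, 1, 0, 1], [0, 0, 1, 0, 0, 1, 0, 1, 1, 0, 0, 1, 1, 0, 1, 0, 0, 1, 1], [0, 0, 1, 0, 1, 1, 0, 1, 1, 0, 0, 1, 1, 0, 1, 0, 0, 1, 1], [0, 0, 1, 0, 0, 1, 1, 0, 1, 0, 0, 1, 1, 0, 0, 1, 0, 1, 1], [0, 0, 1, 0, 1, 1, 0, 0, 1, 1, 0, 1, 1, 0, 1, 0, 0, 1, 1], [0, 0, 1, 0, 0, 1, 1, 0, 0, 1, 0, 1, 1, 0, 0, 1, 1, 0, 1], [0, 0, 1, 0, 1, 1, 0, 0, 1, 1, 0, 1, 0, 0,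 1, 0, 1, 1, 1], [0, 0, 0, 1, 0, 1, 1, 0, 0, 1, 1, 0, 1, 0, 0, 1, 0, 1, 1], [0, 0, 1, 0, 1, 1, 0, 1, 0, 1, 0, 1, 1, 0, 0, 1, 1, 0, 1], [0, 0, 0, 1, 1, 0, 0, 1, 1, 0, 1, 0, 0, 1, 0, 1, 1, 0, 1], [0, 0, 1, 0, 1, 1, 0, 1, 0, 0, 1, 1, 1, 0, 0, 1, 1, 0, 1], [0, 0, 0, 1, 1, 0, 1, 0, 0, 1, 0, 1, 1, 0, 1, 0, 0, 1, 1], [0, 0, 1, 0, 1, 1, 0, 1, 0, 0, 1, 1, 0, 0, 1, 1, 1, 0, 1], [0, 0, 1, 0, 1, 0, 1, 0, 0, 1, 0, 1, 1, 0, 1, 0, 0, 1, 1], [0, 0, 1, 0, 1, 1, 0, 1, 0, 0, 1, 1, 0, 0, 1, 0, 1, 1, 1], [0, 0, 0, 1, 0, 1, 1, 0, 1, 0, 0, 1, 1, 0, 0, 1, 0, 1, 1], [0, 0, 1, 0, 1, 1, 0, 1, 0, 1, 0, 1, 1, 0, 1, 0, 0, 1, 1], [0, 0, 1, 0, 1,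 0, 1, 0, 0, 1, 0, 1, 1, 0, 0, 1, 1, 0, 1], [0, 0, 1, 0, 1, 1, 0, 0, 1, 1, 0, 1, 0, 0, 1, 1, 0, 1, 1]]
def Rot19 : List Nat := [370264, 185132, 92566, 46283, 285285, 404786, 202393, 363340, 181670, 90835, 307561, 415924, 207962, 103981, 314134, 157067, 340677, 432482, 216241, 416948, 208474, 104237, 314262, 157131, 340709, 432498, 216249, 370268, 185134, 92567, 308427, 416357, 470322, 235161, 379724, 189862, 94931, 309609, 370260, 185130, 92565, 308426, 154213, 339250, 169625, 346956, 173478, 86739, 305513, 414900, 207450, 103725, 314006, 157003, 340645, 432466, 216233, 423092, 211546, 105773, 315030, 157515, 340901, 432594, 216297, 370292, 185146, 92573, 308430, 154215, 339251, 431769, 478028, 239014, 119507, 321897, 431768, 215884, 107942, 53971, 289129, 406708, 203354, 101677, 312982, 156491, 340389, 432338, 216169, 370228, 185114, 92557, 308422, 154211, 339249, 370484, 185242, 92621, 308454, 154227, 339257, 431772, 215886, 107943, 316115, 420201, 472244, 236122, 118061, 321174, 160587, 342437, 433362, 216681, 420200, 210100, 105050, 52525, 288406, 144203, 334245, 429266,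 214633, 369460, 184730, 92365, 308326, 154163, 339225, 431756, 215878, 107939, 316113, 371508, 185754, 92877, 308582, 154291, 339289, 431788, 215894, 107947, 316117, 420202, 210101, 367194, 183597, 353942, 176971, 350629, 437458, 218729, 367192, 183596, 91798, 45899, 285093, 404690, 202345, 363316, 181658, 90829, 307558, 153779, 339033, 431660, 215830, 107915, 316101, 420194, 210097, 379700, 189850, 94925, 309606, 154803, 339545, 431916, 215958, 107979, 316133, 420210, 210105, 367196, 183598, 91799, 308043, 416165, 470226, 235113, 416164, 208082, 104041, 314164, 157082, 78541, 301414, 150707, 337497, 430892, 215446, 107723, 316005, 420146, 210073, 367180, 183590, 91795, 308041, 416180, 208090, 104045, 314166, 157083, 340685, 432486, 216243, 370265, 447276, 223638, 111819, 318053, 421170, 210585, 367436, 183718, 91859, 308073, 432484, 216242, 108121, 316204, 158102, 79051, 301669, 412978, 206489, 365388, 182694, 91347, 307817, 416052, 208026, 104013, 314150, 157075, 340681, 416564, 208282, 104141, 314214, 157107, 340697, 432492, 216246, 108123, 316205, 420246, 210123, 367205, 445746, 222873, 373580, 186790, 93395, 308841, 367204, 183602, 91801, 308044, 154022, 77011,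 300649, 412468, 206234, 103117, 313702, 156851, 340569, 432428, 216214, 108107, 316197, 420242, 210121, 478004, 239002, 119501, 321894, 160947, 342617, 433452, 216726, 108363, 316325, 420306, 210153, 367220, 183610, 91805, 308046, 154023, 339155, 431721, 431720, 215860, 107930, 53965, 289126, 144563, 334425, 429356, 214678, 107339, 315813, 420050, 210025, 367156, 183578, 91789, 308038, 154019, 339153, 367284, 183642, 91821, 308054, 154027, 339157, 431722, 215861, 370074, 185037, 354662, 177331, 350809, 437548, 218774, 109387, 316837, 420562, 210281, 370072, 185036, 92518, 46259, 285273, 404780, 202390, 101195, 312741, 418514, 209257, 366772, 183386, 91693, 307990, 153995, 339141, 431714, 215857, 367796, 183898, 91949, 308118, 154059, 339173, 431730, 215865, 370076, 185038, 92519, 308403, 416345, 470316, 235158, 117579, 320933, 422610, 211305, 416344, 208172, 104086, 52043, 288165, 406226, 203113, 363700, 181850, 90925, 307606, 153803, 339045, 431666, 215833, 370060, 185030, 92515, 308401, 380084, 190042, 95021, 309654, 154827, 339557, 431922, 215961, 370124, 185062, 92531, 308409, 416348, 208174, 104087, 314187, 419237, 471762, 235881, 416340, 208170, 104085, 314186,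 157093, 340690, 170345, 347316, 173658, 86829, 305558, 152779, 338533, 431410, 215705, 369996, 184998, 92499, 308393, 478388, 239194, 119597, 321942, 160971, 342629, 433458, 216729, 370508, 185254, 92627, 308457, 416372, 208186, 104093, 314190, 157095, 340691, 432489, 432488, 216244, 108122, 54061, 289174, 144587, 334437, 429362, 214681, 369484, 184742, 92371, 308329, 416308, 208154, 104077, 314182, 157091, 340689, 416436, 208218, 104109, 314198, 157099, 340693, 432490, 216245, 370266, 185133, 354710, 177355, 350821, 437554, 218777, 371532, 185766, 92883, 308585, 367188, 183594, 91797, 308042, 154021, 339154, 169577, 346932, 173466, 86733, 305510, 152755, 338521, 431404, 215702, 107851, 316069, 420178, 210089, 445236, 222618, 111309, 317798, 158899, 341593, 432940, 216470, 108235, 316261, 420274, 210137, 367212, 183606, 91803, 308045, 416166, 208083, 366185]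
lemma rotdef19 : Rot19 = Reps19.flatMap (fun r => (List.range 19).map (fun s => enc (r.rotate s))) := by decide
lemma replen19 : ∀ r ∈ Reps19, r.length = 19 := by decide
lemma cmem19 : ∀ j, j ≤ 271 → (tmCode 10 / 2^j) % 2^19 ∈ Rot19 := by decide
lemma cls19 : tmCyclicComplexity 19 ≤ 28 := by
  have h := base_class 19 271 Reps19 Rot19 (by norm_num) (by norm_num [covW]) (by norm_num)
    rotdef19 replen19 cmem19
  have hl : Reps19.length = 28 := by decide
  exact le_of_le_of_eq h hl

def Reps22 : List (List (Fin 2)) := [[0, 0, 1, 0, 1, 0, 1, 1, 0, 1, 0, 0, 1, 1, 0, 0, 1, 0, 1, 1, 0, 1], [0, 0, 1, 0, 1, 1, 0, 1, 0, 0, 1, 0, 1, 1, 1, 1, 0, 1, 0, 0, 1, 1], [0, 0, 1, 0, 1, 1, 0, 1, 0, 0, 1, 0, 1, 1, 0, 1, 0, 1, 0, 0, 1, 1], [0, 0, 0, 1, 0, 0, 1, 1, 0, 0, 1, 0, 1, 1, 0, 1, 0, 0, 1, 0, 1, 1], [0, 0, 1, 0, 1, 1, 0, 0, 1, 1, 0,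 0, 1, 1, 0, 0, 1, 0, 1, 1, 0, 1], [0, 0, 1, 0, 1, 1, 0, 0, 1, 1, 0, 1, 1, 1, 0, 0, 1, 0, 1, 1, 0, 1], [0, 0, 1, 0, 1, 1, 0, 0, 1, 1, 0, 1, 0, 1, 0, 0, 1, 0, 1, 1, 0, 1], [0, 0, 0, 0, 1, 0, 1, 1, 0, 1, 0, 0, 1, 0, 1, 1, 0, 0, 1, 1, 0, 1], [0, 0, 1, 0, 1, 0, 1, 1, 0, 1, 0, 0, 1, 0, 1, 1, 0, 0, 1, 1, 0, 1], [0, 0, 1, 0, 1, 1, 0, 0, 1, 1, 0, 1, 0, 0, 1, 1, 1, 0, 1, 1, 0, 1], [0, 0, 1, 0, 1, 1, 0, 0, 1, 1, 0, 1, 0, 0, 1, 1, 0, 0, 1, 1, 0, 1], [0, 0, 1, 0, 0, 1, 0, 0, 1, 0, 1, 1, 0, 0, 1, 1, 0, 1, 0, 0, 1, 1], [0, 0, 1, 0, 1, 1, 0, 0, 1, 0, 1, 1, 0, 0, 1, 1, 0, 1, 0, 0, 1, 1], [0, 0, 1, 0, 1, 1, 0, 0, 1, 1, 1, 1, 0,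 0, 1, 1, 0, 1, 0, 0, 1, 1], [0, 0, 1, 0, 1, 1, 0, 0, 1, 1, 0, 1, 0, 0, 1, 1, 0, 1, 0, 0, 1, 1], [0, 0, 1, 0, 0, 1, 0, 0, 1, 1, 0, 0, 1, 0, 1, 1, 0, 0, 1, 1, 0, 1], [0, 0, 1, 0, 1, 1, 0, 0, 1, 1, 0, 0, 1, 0, 1, 1, 0, 0, 1, 1, 0, 1], [0, 0, 1, 0, 1, 1, 0, 0, 1, 1, 0, 1, 0, 0, 1, 0, 1, 1, 0, 1, 1, 1], [0, 0, 1, 0, 1, 1, 0, 0, 1, 1, 0, 1, 0, 0, 1, 0, 1, 1, 0, 1, 0, 1], [0, 0, 0, 0, 1, 0, 1, 1, 0, 0, 1, 1, 0, 1, 0, 0, 1, 0, 1, 1, 0, 1], [0, 0, 1, 0, 1, 0, 1, 1, 0, 0, 1, 1, 0, 1, 0, 0, 1, 0, 1, 1, 0, 1], [0, 0, 1, 0, 1, 1, 0, 1, 0, 0, 1, 1, 1, 0, 1, 1, 0, 0, 1, 1, 0, 1], [0, 0, 1, 0, 1, 1, 0, 1, 0, 0, 1, 1, 0, 0, 1,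 1, 0, 0, 1, 1, 0, 1], [0, 0, 0, 1, 1, 0, 1, 0, 0, 1, 0, 1, 1, 0, 1, 0, 0, 1, 1, 0, 0, 1], [0, 0, 1, 0, 1, 0, 1, 1, 0, 1, 0, 0, 1, 0, 1, 1, 0, 1, 0, 0, 1, 1], [0, 0, 1, 0, 1, 1, 0, 1, 0, 0, 1, 1, 0, 0, 1, 0, 1, 1, 1, 1, 0, 1], [0, 0, 1, 0, 1, 1, 0, 1, 0, 0, 1, 1, 0, 0, 1, 0, 1, 1, 0, 1, 0, 1], [0, 0, 0, 0, 1, 0, 1, 1, 0, 1, 0, 0, 1, 1, 0, 0, 1, 0, 1, 1, 0, 1], [0, 0, 1, 0, 1, 1, 0, 0, 1, 1, 0, 1, 0, 0, 1, 0, 1, 1, 1, 1, 0, 1], [0, 0, 0, 1, 0, 0, 1, 0, 1, 1, 0, 1, 0, 0, 1, 1, 0, 0, 1, 0, 1, 1], [0, 0, 1, 0, 1, 1, 0, 0, 1, 1, 0, 0, 1, 0, 1, 1, 0, 1, 0, 0, 1, 1], [0, 0, 1, 0, 1, 1, 0, 0, 1, 1, 0, 1, 1, 0, 1, 1, 0,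 1, 0, 0, 1, 1], [0, 0, 0, 0, 1, 1, 0, 0, 1, 0, 1, 1, 0, 0, 1, 1, 0, 1, 0, 0, 1, 1], [0, 0, 1, 0, 1, 1, 0, 1, 1, 0, 1, 1, 0, 0, 1, 1, 0, 1, 0, 0, 1, 1], [0, 0, 1, 0, 1, 1, 0, 1, 0, 0, 1, 1, 0, 0, 1, 1, 0, 1, 0, 0, 1, 1], [0, 0, 0, 1, 1, 0, 1, 0, 0, 1, 1, 0, 0, 1, 0, 1, 1, 0, 1, 0, 0, 1]]
def Rot22 : List Nat := [2962132, 1481066, 740533, 2467418, 1233709, 2714006, 1357003, 2775653, 3484978, 1742489, 2968396, 1484198, 742099, 2468201, 3331252, 1665626, 832813, 2513558, 1256779, 2725541, 3459922, 1729961, 3339444, 1669722, 834861, 2514582, 1257291, 2725797, 3460050, 1730025, 2962164, 1481082, 740541, 2467422, 1233711, 2714007, 3454155, 3824229, 4009266, 2004633, 3099468, 1549734, 774867, 2484585, 3323060, 1661530, 830765, 2512534, 1256267, 2725285, 3459794, 1729897, 2962100, 1481050, 740525, 2467414, 1233707, 2714005, 3454154, 1727077, 2960690, 1480345, 2837324,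 1418662, 709331, 2451817, 3454152, 1727076, 863538, 431769, 2313036, 1156518, 578259, 2386281, 3290292, 1645146, 822573, 2508438, 1254219, 2724261, 3459282, 1729641, 2961972, 1480986, 740493, 2467398, 1233699, 2714001, 2962228, 1481114, 740557, 2467430, 1233715, 2714009, 3454156, 1727078, 863539, 2528921, 3361612, 1680806, 840403, 2517353, 3355828, 1677914, 838957, 2516630, 1258315, 2726309, 3460306, 1730153, 2964276, 1482138, 741069, 2467686, 1233843, 2714073, 3454188, 1727094, 863547, 2528925, 3361614, 1680807, 2937555, 3565929, 3880116, 1940058, 970029, 2582166, 1291083, 2742693, 3468498, 1734249, 2960180, 1480090, 740045, 2467174, 1233587, 2713945, 3454124, 1727062, 863531, 2528917, 3361610, 1680805, 2937554, 1468777, 2831540, 1415770, 707885, 2451094, 1225547, 2709925, 3452114, 1726057, 2937552, 1468776, 734388, 367194, 183597, 2188950, 1094475, 2644389, 3419346, 1709673, 2951988, 1475994, 737997, 2466150, 1233075, 2713689, 3453996, 1726998, 863499, 2528901, 3361602, 1680801, 2937556, 1468778, 734389, 2464346, 1232173, 2713238, 1356619, 2775461, 3484882, 1742441, 2968372, 1484186,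 742093, 2468198, 1234099, 2714201, 3454252, 1727126, 863563, 2528933, 3361618, 1680809, 3001140, 1500570, 750285, 2472294, 1236147, 2715225, 3454764, 1727382, 863691, 2528997, 3361650, 1680825, 2937564, 1468782, 734391, 2464347, 3329325, 3761814, 1880907, 3037605, 3615954, 1807977, 2935604, 1467802, 733901, 2464102, 1232051, 2713177, 3453740, 1726870, 863435, 2528869, 3361586, 1680793, 2937548, 1468774, 734387, 2464345, 3329324, 1664662, 832331, 2513317, 3353810, 1676905, 3329316, 1664658, 832329, 2513316, 1256658, 628329, 2411316, 1205658, 602829, 2398566, 1199283, 2696793, 3445548, 1722774, 861387, 2527845, 3361074, 1680537, 2937420, 1468710, 734355, 2464329, 3329332, 1664666, 832333, 2513318, 1256659, 2725481, 3459892, 1729946, 864973, 2529638, 1264819, 2729561, 3461932, 1730966, 865483, 2529893, 3362098, 1681049, 2937676, 1468838, 734419, 2464361, 3329844, 1664922, 832461, 2513382, 1256691, 2725497, 3459900, 1729950, 864975, 2529639, 3361971, 3778137, 3986220, 1993110, 996555, 2595429, 3394866, 1697433, 2945868, 1472934, 736467, 2465385, 3328820, 1664410, 832205, 2513254, 1256627,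 2725465, 3459884, 1729942, 864971, 2529637, 3361970, 1680985, 2937644, 1468822, 734411, 2464357, 3329330, 1664665, 2929484, 1464742, 732371, 2463337, 2937636, 1468818, 734409, 2464356, 1232178, 616089, 2405196, 1202598, 601299, 2397801, 3296052, 1648026, 824013, 2509158, 1254579, 2724441, 3459372, 1729686, 864843, 2529573, 3361938, 1680969, 2937652, 1468826, 734413, 2464358, 1232179, 2713241, 3453772, 1726886, 863443, 2528873, 3361588, 1680794, 840397, 2517350, 1258675, 2726489, 3460396, 1730198, 865099, 2529701, 3362002, 1681001, 3885876, 1942938, 971469, 2582886, 1291443, 2742873, 3468588, 1734294, 867147, 2530725, 3362514, 1681257, 2937780, 1468890, 734445, 2464374, 1232187, 2713245, 3453774, 1726887, 2960595, 3577449, 2837300, 1418650, 709325, 2451814, 1225907, 2710105, 3452204, 1726102, 863051, 2528677, 3361490, 1680745, 2937524, 1468762, 734381, 2464342, 1232171, 2713237, 3453770, 1726885, 2960594, 1480297, 2960592, 1480296, 740148, 370074, 185037, 2189670, 1094835, 2644569, 3419436, 1709718, 854859, 2524581, 3359442, 1679721, 2937012, 1468506, 734253, 2464278, 1232139, 2713221,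 3453762, 1726881, 2960596, 1480298, 740149, 2467226, 1233613, 2713958, 1356979, 2775641, 3484972, 1742486, 871243, 2532773, 3363538, 1681769, 2938036, 1469018, 734509, 2464406, 1232203, 2713253, 3453778, 1726889, 2940084, 1470042, 735021, 2464662, 1232331, 2713317, 3453810, 1726905, 2960604, 1480302, 740151, 2467227, 3330765, 3762534, 1881267, 3037785, 3616044, 1808022, 904011, 2549157, 3371730, 1685865, 2935988, 1467994, 733997, 2464150, 1232075, 2713189, 3453746, 1726873, 2960588, 1480294, 740147, 2467225, 3330764, 1665382, 832691, 2513497, 3353900, 1676950, 838475, 2516389, 3355346, 1677673, 2513496, 1256748, 628374, 314187, 2254245, 3224274, 1612137, 2903220, 1451610, 725805, 2460054, 1230027, 2712165, 3453234, 1726617, 2960460, 1480230, 740115, 2467209, 3330756, 1665378, 832689, 3330772, 1665386, 832693, 2513498, 1256749, 2725526, 1362763, 2778533, 3486418, 1743209, 2968756, 1484378, 742189, 2468246, 1234123, 2714213, 3454258, 1727129, 2960716, 1480358, 740179, 2467241, 3099828, 1549914, 774957, 2484630, 1242315, 2718309, 3456306, 1728153, 2961228, 1480614, 740307, 2467305,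 3330804, 1665402, 832701, 2513502, 1256751, 2725527, 3459915, 3827109, 4010706, 2005353, 2837684, 1418842, 709421, 2451862, 1225931, 2710117, 3452210, 1726105, 2960204, 1480102, 740051, 2467177, 3330740, 1665370, 832685, 2513494, 1256747, 2725525, 3459914, 1729957, 2962130, 1481065, 2962128, 1481064, 740532, 370266, 185133, 2189718, 1094859, 2644581, 3419442, 1709721, 2952012, 1476006, 738003, 2466153, 3330228, 1665114, 832557, 2513430, 1256715, 2725509, 3459906, 1729953, 3099444, 1549722, 774861, 2484582, 1242291, 2718297, 3456300, 1728150, 864075, 2529189, 3361746, 1680873, 2937588, 1468794, 734397, 2464350, 1232175, 2713239, 3453771, 3824037, 4009170, 2004585, 3459912, 1729956, 864978, 432489, 2313396, 1156698, 578349, 2386326, 1193163, 2693733, 3444018, 1722009, 2958156, 1479078, 739539, 2466921, 3330612, 1665306, 832653, 2513478, 1256739, 2725521, 3330868, 1665434, 832717, 2513510, 1256755, 2725529, 3459916, 1729958, 864979, 2529641, 3361972, 1680986, 840493, 2517398, 1258699, 2726501, 3460402, 1730201, 2962252, 1481126, 740563, 2467433, 3332916, 1666458, 833229, 2513766, 1256883,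 2725593, 3459948, 1729974, 864987, 2529645, 3361974, 1680987, 2937645, 3565974, 1782987, 2988645, 3591474, 1795737, 2995020, 1497510, 748755, 2471529, 3329328, 1664664, 832332, 416166, 208083, 2201193, 3197748, 1598874, 799437, 2496870, 1248435, 2721369, 3457836, 1728918, 864459, 2529381, 3361842, 1680921, 2937612, 1468806, 734403, 2464353, 3329460, 1664730, 832365, 2513334, 1256667, 2725485, 3459894, 1729947, 2962125, 3578214, 1789107, 2991705, 3593004, 1796502, 898251, 2546277, 3370290, 1685145, 2939724, 1469862, 734931, 2464617, 3329204, 1664602, 832301, 2513302, 1256651, 2725477, 3459890, 1729945, 2962124, 1481062, 740531, 2467417, 3330860, 1665430, 832715, 2513509, 3353906, 1676953, 2935628, 1467814, 733907, 2464105, 2467416, 1233708, 616854, 308427, 2251365, 3222834, 1611417, 2902860, 1451430, 725715, 2460009, 3327156, 1663578, 831789, 2513046, 1256523, 2725413, 3459858, 1729929, 2962116, 1481058, 740529]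
lemma rotdef22 : Rot22 = Reps22.flatMap (fun r => (List.range 22).map (fun s => enc (r.rotate s))) := by decide
lemma replen22 : ∀ r ∈ Reps22, r.length = 22 := by decide
lemma cmem22 : ∀ j, j ≤ 319 → (tmCode 10 / 2^j) % 2^22 ∈ Rot22 := by decide
lemma cls22 : tmCyclicComplexity 22 ≤ 36 := by
  have h := base_class 22 319 Reps22 Rot22 (by norm_num) (by norm_num [covW]) (by norm_num)
    rotdef22 replen22 cmem22
  have hl : Reps22.length = 36 := by decide
  exact le_of_le_of_eq h hl

def Reps23 : List (List (Fin 2)) := [[0, 0, 1, 0, 1, 1, 0, 1, 0, 0, 1, 0, 1, 1, 0, 1, 1, 0, 1, 0, 0, 1, 1], [0, 0, 1, 0, 1, 0, 0, 1, 1, 0, 0, 1, 0, 1, 1, 0, 1, 0, 0, 1, 0, 1, 1], [0, 0, 1, 0, 1, 1, 0, 0, 1, 1, 1, 0, 0, 1, 1, 0, 0, 1, 0, 1, 1, 0, 1], [0, 0, 0, 1, 1, 0, 0, 1, 0, 1, 1, 0, 1, 0, 0, 1, 0, 1, 1, 0, 0, 1, 1], [0, 0, 1, 0, 1, 1, 0,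 0, 1, 1, 0, 1, 0, 1, 1, 0, 0, 1, 0, 1, 1, 0, 1], [0, 0, 1, 0, 0, 1, 0, 1, 1, 0, 1, 0, 0, 1, 0, 1, 1, 0, 0, 1, 1, 0, 1], [0, 0, 1, 0, 1, 1, 0, 0, 1, 1, 0, 1, 0, 0, 1, 1, 0, 1, 0, 1, 1, 0, 1], [0, 0, 0, 1, 1, 0, 1, 0, 0, 1, 0, 1, 1, 0, 0, 1, 1, 0, 1, 0, 0, 1, 1], [0, 0, 1, 0, 1, 1, 0, 0, 1, 1, 0, 1, 0, 0, 1, 1, 0, 0, 1, 1, 1, 0, 1], [0, 0, 1, 0, 1, 0, 1, 0, 0, 1, 0, 1, 1, 0, 0, 1, 1, 0, 1, 0, 0, 1, 1], [0, 0, 1, 0, 1, 1, 0, 0, 1, 1, 0, 1, 0, 0, 1, 1, 0, 0, 1, 0, 1, 1, 1], [0, 0, 0, 1, 0, 1, 1, 0, 0, 1, 1, 0, 1, 0, 0, 1, 1, 0, 0, 1, 0, 1, 1], [0, 0, 1, 0, 1, 1, 0, 0, 1, 1, 0, 1, 1, 0, 0, 1, 1, 0, 1, 0, 0, 1, 1],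 [0, 0, 0, 1, 1, 0, 1, 0, 0, 1, 1, 0, 0, 1, 0, 1, 1, 0, 0, 1, 1, 0, 1], [0, 0, 1, 0, 1, 1, 0, 0, 1, 1, 0, 1, 0, 0, 1, 1, 1, 0, 1, 0, 0, 1, 1], [0, 0, 1, 0, 1, 0, 1, 0, 0, 1, 1, 0, 0, 1, 0, 1, 1, 0, 0, 1, 1, 0, 1], [0, 0, 1, 0, 1, 1, 0, 0, 1, 1, 0, 1, 0, 0, 1, 0, 1, 1, 1, 0, 0, 1, 1], [0, 0, 0, 1, 1, 0, 0, 1, 0, 1, 1, 0, 0, 1, 1, 0, 1, 0, 0, 1, 0, 1, 1], [0, 0, 1, 0, 1, 1, 0, 0, 1, 1, 0, 1, 0, 0, 1, 0, 1, 1, 0, 1, 0, 1, 1], [0, 0, 1, 0, 0, 1, 0, 1, 1, 0, 0, 1, 1, 0, 1, 0, 0, 1, 0, 1, 1, 0, 1], [0, 0, 1, 0, 1, 1, 0, 1, 0, 0, 1, 1, 0, 1, 0, 1, 1, 0, 0, 1, 1, 0, 1], [0, 0, 0, 1, 1, 0, 0, 1, 1, 0, 1, 0, 0, 1, 0, 1,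 1, 0, 1, 0, 0, 1, 1], [0, 0, 1, 0, 1, 1, 0, 1, 0, 0, 1, 1, 0, 0, 1, 1, 1, 0, 0, 1, 1, 0, 1], [0, 0, 1, 0, 1, 0, 0, 1, 1, 0, 1, 0, 0, 1, 0, 1, 1, 0, 1, 0, 0, 1, 1], [0, 0, 1, 0, 1, 1, 0, 1, 0, 0, 1, 1, 0, 0, 1, 0, 1, 1, 0, 1, 1, 0, 1], [0, 0, 1, 0, 0, 1, 0, 1, 1, 0, 1, 0, 0, 1, 1, 0, 0, 1, 0, 1, 1, 0, 1], [0, 0, 1, 0, 1, 1, 0, 0, 1, 1, 0, 1, 0, 0, 1, 0, 1, 1, 0, 1, 1, 0, 1], [0, 0, 1, 0, 1, 0, 0, 1, 0, 1, 1, 0, 1, 0, 0, 1, 1, 0, 0, 1, 0, 1, 1], [0, 0, 1, 0, 1, 1, 0, 0, 1, 1, 1, 0, 0, 1, 0, 1, 1, 0, 1, 0, 0, 1, 1], [0, 0, 0, 1, 0, 1, 1, 0, 1, 0, 0, 1, 1, 0, 0, 1, 0, 1, 1, 0, 0, 1, 1], [0, 0, 1, 0, 1, 1, 0, 0, 1,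 1, 0, 1, 0, 1, 0, 1, 1, 0, 1, 0, 0, 1, 1], [0, 0, 1, 0, 0, 1, 1, 0, 0, 1, 0, 1, 1, 0, 0, 1, 1, 0, 1, 0, 0, 1, 1], [0, 0, 1, 0, 1, 1, 0, 1, 0, 1, 0, 1, 1, 0, 0, 1, 1, 0, 1, 0, 0, 1, 1], [0, 0, 0, 1, 1, 0, 0, 1, 1, 0, 1, 0, 0, 1, 1, 0, 0, 1, 0, 1, 1, 0, 1], [0, 0, 1, 0, 1, 1, 0, 1, 0, 0, 1, 1, 1, 0, 0, 1, 1, 0, 1, 0, 0, 1, 1], [0, 0, 1, 0, 1, 0, 0, 1, 1, 0, 1, 0, 0, 1, 1, 0, 0, 1, 0, 1, 1, 0, 1]]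
def Rot23 : List Nat := [6665396, 3332698, 1666349, 5027478, 2513739, 5451173, 6919890, 3459945, 5924276, 2962138, 1481069, 4934838, 2467419, 5428013, 6908310, 3454155, 5921381, 7154994, 3577497, 5983052, 2991526, 1495763, 4942185, 6908308, 3454154, 1727077, 5057842, 2528921, 5458764, 2729382, 1364691, 4876649, 6632628, 3316314, 1658157, 5023382, 2511691, 5450149, 6919378, 3459689, 5924148, 2962074, 1481037, 4934822, 2467411, 5428009, 5924660, 2962330, 1481165, 4934886, 2467443, 5428025, 6908316, 3454158, 1727079, 5057843, 6723225, 7555916, 3777958, 1888979, 5138793, 6763700, 3381850, 1690925, 5039766, 2519883, 5454245, 6921426, 3460713, 6723224, 3361612, 1680806, 840403, 4614505, 6501556, 3250778, 1625389, 5006998, 2503499, 5446053, 6917330, 3458665, 5923636, 2961818, 1480909, 4934758, 2467379, 5427993, 6908300, 3454150, 1727075, 5057841, 5925684, 2962842, 1481421, 4935014, 2467507, 5428057, 6908332, 3454166, 1727083, 5057845, 6723226, 3361613, 5875110, 2937555, 5663081, 7025844, 3512922, 1756461, 5072534, 2536267, 5462437, 6925522, 3462761, 5875108, 2937554, 1468777,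 4928692, 2464346, 1232173, 4810390, 2405195, 5396901, 6892754, 3446377, 5917492, 2958746, 1479373, 4933990, 2466995, 5427801, 6908204, 3454102, 1727051, 5057829, 6723218, 3361609, 5950260, 2975130, 1487565, 4938086, 2469043, 5428825, 6908716, 3454358, 1727179, 5057893, 6723250, 3361625, 5875116, 2937558, 1468779, 4928693, 6658650, 3329325, 5858966, 2929483, 5659045, 7023826, 3511913, 6658648, 3329324, 1664662, 832331, 4610469, 6499538, 3249769, 5819188, 2909594, 1454797, 4921702, 2460851, 5424729, 6906668, 3453334, 1726667, 5057637, 6723122, 3361561, 5875084, 2937542, 1468771, 4928689, 6081332, 3040666, 1520333, 4954470, 2477235, 5432921, 6910764, 3455382, 1727691, 5058149, 6723378, 3361689, 5875148, 2937574, 1468787, 4928697, 6658652, 3329326, 1664663, 5026635, 6707621, 7548114, 3774057, 6658644, 3329322, 1664661, 5026634, 2513317, 5450962, 2725481, 5557044, 2778522, 1389261, 4888934, 2444467, 5416537, 6902572, 3451286, 1725643, 5057125, 6722866, 3361433, 5875020, 2937510, 1468755, 4928681, 7654196, 3827098, 1913549, 5151078, 2575539, 5482073, 6935340, 3467670, 1733835,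 5061221, 6724914, 3362457, 5875532, 2937766, 1468883, 4928745, 6658676, 3329338, 1664669, 5026638, 2513319, 5450963, 6919785, 6919784, 3459892, 1729946, 864973, 4626790, 2313395, 5351001, 6869804, 3434902, 1717451, 5053029, 6720818, 3360409, 5874508, 2937254, 1468627, 4928617, 6658612, 3329306, 1664653, 5026630, 2513315, 5450961, 6658868, 3329434, 1664717, 5026662, 2513331, 5450969, 6919788, 3459894, 1729947, 5059277, 6723942, 3361971, 5875289, 7131948, 3565974, 1782987, 5085797, 6737202, 3368601, 5878604, 2939302, 1469651, 4929129, 5875288, 2937644, 1468822, 734411, 4561509, 6475058, 3237529, 5813068, 2906534, 1453267, 4920937, 6654772, 3327386, 1663693, 5026150, 2513075, 5450841, 6919724, 3459862, 1729931, 5059269, 6723938, 3361969, 6671156, 3335578, 1667789, 5028198, 2514099, 5451353, 6919980, 3459990, 1729995, 5059301, 6723954, 3361977, 5875292, 2937646, 1468823, 4928715, 6658661, 7523634, 3761817, 6075212, 3037606, 1518803, 4953705, 5875284, 2937642, 1468821, 4928714, 2464357, 5426482, 2713241, 5550924, 2775462, 1387731, 4888169, 6638388, 3319194, 1659597, 5024102,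 2512051, 5450329, 6919468, 3459734, 1729867, 5059237, 6723922, 3361961, 6769460, 3384730, 1692365, 5040486, 2520243, 5454425, 6921516, 3460758, 1730379, 5059493, 6724050, 3362025, 5875316, 2937658, 1468829, 4928718, 2464359, 5426483, 6907545, 7648076, 3824038, 1912019, 5150313, 6907544, 3453772, 1726886, 863443, 4626025, 6507316, 3253658, 1626829, 5007718, 2503859, 5446233, 6917420, 3458710, 1729355, 5058981, 6723794, 3361897, 5875252, 2937626, 1468813, 4928710, 2464355, 5426481, 7031604, 3515802, 1757901, 5073254, 2536627, 5462617, 6925612, 3462806, 1731403, 5060005, 6724306, 3362153, 5875380, 2937690, 1468845, 4928726, 2464363, 5426485, 6907546, 3453773, 5921190, 2960595, 5674601, 5921188, 2960594, 1480297, 4934452, 2467226, 1233613, 4811110, 2405555, 5397081, 6892844, 3446422, 1723211, 5055909, 6722258, 3361129, 5874868, 2937434, 1468717, 4928662, 2464331, 5426469, 6907538, 3453769, 5876916, 2938458, 1469229, 4928918, 2464459, 5426533, 6907570, 3453785, 5921196, 2960598, 1480299, 4934453, 6661530, 3330765, 5859686, 2929843, 5659225, 7023916, 3511958, 1755979, 5072293,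 6730450, 3365225, 6661528, 3330764, 1665382, 832691, 4610649, 6499628, 3249814, 1624907, 5006757, 6697682, 3348841, 5868724, 2934362, 1467181, 4927894, 2463947, 5426277, 6907442, 3453721, 5921164, 2960582, 1480291, 4934449, 5885108, 2942554, 1471277, 4929942, 2464971, 5426789, 6907698, 3453849, 5921228, 2960614, 1480307, 4934457, 6661532, 3330766, 1665383, 5026995, 6707801, 7548204, 3774102, 1887051, 5137829, 6763218, 3381609, 6661524, 3330762, 1665381, 5026994, 2513497, 5451052, 2725526, 1362763, 4875685, 6632146, 3316073, 5852340, 2926170, 1463085, 4925846, 2462923, 5425765, 6907186, 3453593, 5921100, 2960550, 1480275, 4934441, 5983412, 2991706, 1495853, 4942230, 2471115, 5429861, 6909234, 3454617, 5921612, 2960806, 1480403, 4934505, 6661556, 3330778, 1665389, 5026998, 2513499, 5451053, 6919830, 3459915, 5924261, 7156434, 3578217, 5924260, 2962130, 1481065, 4934836, 2467418, 1233709, 4811158, 2405579, 5397093, 6892850, 3446425, 5917516, 2958758, 1479379, 4933993, 6661300, 3330650, 1665325, 5026966, 2513483, 5451045, 6919826, 3459913, 5983028, 2991514, 1495757, 4942182,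 2471091, 5429849, 6909228, 3454614, 1727307, 5057957, 6723282, 3361641, 5875124, 2937562, 1468781, 4928694, 2464347, 5426477, 6907542, 3453771, 5921189, 7154898, 3577449, 6919828, 3459914, 1729957, 5059282, 2529641, 5459124, 2729562, 1364781, 4876694, 2438347, 5413477, 6901042, 3450521, 5919564, 2959782, 1479891, 4934249, 6661428, 3330714, 1665357, 5026982, 2513491, 5451049, 6661940, 3330970, 1665485, 5027046, 2513523, 5451065, 6919836, 3459918, 1729959, 5059283, 6723945, 7556276, 3778138, 1889069, 5138838, 2569419, 5479013, 6933810, 3466905, 5927756, 2963878, 1481939, 4935273, 6723944, 3361972, 1680986, 840493, 4614550, 2307275, 5347941, 6868274, 3434137, 5911372, 2955686, 1477843, 4933225, 6660916, 3330458, 1665229, 5026918, 2513459, 5451033, 6919820, 3459910, 1729955, 5059281, 6662964, 3331482, 1665741, 5027174, 2513587, 5451097, 6919852, 3459926, 1729963, 5059285, 6723946, 3361973, 5875290, 2937645, 5663126, 2831563, 5610085, 6999346, 3499673, 5944140, 2972070, 1486035, 4937321, 6658660, 3329330, 1664665, 5026636, 2513318, 1256659, 4822633, 6605620, 3302810, 1651405,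 5020006, 2510003, 5449305, 6918956, 3459478, 1729739, 5059173, 6723890, 3361945, 5875276, 2937638, 1468819, 4928713, 6658740, 3329370, 1664685, 5026646, 2513323, 5450965, 6919786, 3459893, 5924250, 2962125, 5675366, 2837683, 5613145, 7000876, 3500438, 1750219, 5069413, 6729010, 3364505, 5876556, 2938278, 1469139, 4928873, 5924248, 2962124, 1481062, 740531, 4564569, 6476588, 3238294, 1619147, 5003877, 6696242, 3348121, 5868364, 2934182, 1467091, 4927849, 6658228, 3329114, 1664557, 5026582, 2513291, 5450949, 6919778, 3459889, 6659252, 3329626, 1664813, 5026710, 2513355, 5450981, 6919794, 3459897, 5924252, 2962126, 1481063, 4934835, 6661721, 7525164, 3762582, 1881291, 5134949, 6761778, 3380889, 5884748, 2942374, 1471187, 4929897, 5924244, 2962122, 1481061, 4934834, 2467417, 5428012, 2714006, 1357003, 4872805, 6630706, 3315353, 5851980, 2925990, 1462995, 4925801, 6657204, 3328602, 1664301, 5026454, 2513227, 5450917, 6919762, 3459881]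
lemma rotdef23 : Rot23 = Reps23.flatMap (fun r => (List.range 23).map (fun s => enc (r.rotate s))) := by decide
lemma replen23 : ∀ r ∈ Reps23, r.length = 23 := by decide
lemma cmem23 : ∀ j, j ≤ 335 → (tmCode 10 / 2^j) % 2^23 ∈ Rot23 := by decide
lemma cls23 : tmCyclicComplexity 23 ≤ 36 := by
  have h := base_class 23 335 Reps23 Rot23 (by norm_num) (by norm_num [covW]) (by norm_num)
    rotdef23 replen23 cmem23
  have hl : Reps23.length = 36 := by decide
  exact le_of_le_of_eq h hl

def Reps26 : List (List (Fin 2)) := [[0, 0, 1, 0, 1, 1, 0, 0, 1, 0, 1, 1, 0, 1, 0, 0, 1, 1, 0, 0, 1, 0, 1, 1, 0, 1], [0, 0, 1, 0, 1, 1, 0, 0, 1, 1, 1, 1, 0, 1, 0, 0, 1, 1, 0, 0, 1, 0, 1, 1, 0, 1], [0, 0, 1, 0, 1, 1, 0, 0, 1, 1, 0, 1, 0, 1, 0, 0, 1, 1, 0, 0, 1, 0, 1, 1, 0, 1], [0, 0, 0, 0, 1, 1, 0, 0, 1, 0, 1, 1, 0, 1, 0, 0, 1, 0, 1, 1, 0,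 0, 1, 1, 0, 1], [0, 0, 1, 0, 1, 1, 0, 0, 1, 0, 1, 1, 0, 1, 0, 0, 1, 0, 1, 1, 0, 0, 1, 1, 0, 1], [0, 0, 1, 0, 1, 1, 0, 0, 1, 1, 0, 1, 0, 0, 1, 1, 1, 1, 0, 0, 1, 0, 1, 1, 0, 1], [0, 0, 1, 0, 1, 1, 0, 0, 1, 1, 0, 1, 0, 0, 1, 1, 0, 1, 0, 0, 1, 0, 1, 1, 0, 1], [0, 0, 0, 0, 1, 0, 1, 1, 0, 1, 0, 0, 1, 0, 1, 1, 0, 0, 1, 1, 0, 1, 0, 0, 1, 1], [0, 0, 1, 0, 1, 0, 1, 1, 0, 1, 0, 0, 1, 0, 1, 1, 0, 0, 1, 1, 0, 1, 0, 0, 1, 1], [0, 0, 1, 0, 1, 1, 0, 0, 1, 1, 0, 1, 0, 0, 1, 1, 0, 0, 1, 0, 1, 1, 1, 1, 0, 1], [0, 0, 1, 0, 1, 1, 0, 0, 1, 1, 0, 1, 0, 0, 1, 1, 0, 0, 1, 0, 1, 1, 0, 1, 0, 1], [0, 0, 0, 1, 0, 0, 1, 0, 1, 1, 0, 0, 1,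 1, 0, 1, 0, 0, 1, 1, 0, 0, 1, 0, 1, 1], [0, 0, 1, 0, 1, 1, 0, 0, 1, 1, 0, 0, 1, 0, 1, 1, 0, 0, 1, 1, 0, 1, 0, 0, 1, 1], [0, 0, 1, 0, 1, 1, 0, 0, 1, 1, 0, 1, 1, 0, 1, 1, 0, 0, 1, 1, 0, 1, 0, 0, 1, 1], [0, 0, 1, 0, 1, 1, 0, 0, 1, 1, 0, 1, 0, 0, 1, 1, 0, 0, 1, 1, 0, 1, 0, 0, 1, 1], [0, 0, 0, 1, 1, 0, 1, 0, 0, 1, 1, 0, 0, 1, 0, 1, 1, 0, 0, 1, 1, 0, 1, 0, 0, 1], [0, 0, 1, 0, 1, 0, 1, 1, 0, 1, 0, 0, 1, 1, 0, 0, 1, 0, 1, 1, 0, 0, 1, 1, 0, 1], [0, 0, 1, 0, 1, 1, 0, 0, 1, 1, 0, 1, 0, 0, 1, 0, 1, 1, 1, 1, 0, 1, 0, 0, 1, 1], [0, 0, 1, 0, 1, 1, 0, 0, 1, 1, 0, 1, 0, 0, 1, 0, 1, 1, 0, 1, 0, 1, 0, 0, 1, 1], [0, 0, 0, 0, 1,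 1, 0, 0, 1, 0, 1, 1, 0, 0, 1, 1, 0, 1, 0, 0, 1, 0, 1, 1, 0, 1], [0, 0, 1, 0, 1, 1, 0, 0, 1, 0, 1, 1, 0, 0, 1, 1, 0, 1, 0, 0, 1, 0, 1, 1, 0, 1], [0, 0, 1, 0, 1, 1, 0, 0, 1, 1, 0, 1, 0, 0, 1, 0, 1, 1, 0, 1, 0, 0, 1, 1, 1, 1], [0, 0, 1, 0, 1, 1, 0, 0, 1, 1, 0, 1, 0, 0, 1, 0, 1, 1, 0, 1, 0, 0, 1, 1, 0, 1], [0, 0, 0, 0, 1, 0, 1, 1, 0, 0, 1, 1, 0, 1, 0, 0, 1, 0, 1, 1, 0, 1, 0, 0, 1, 1], [0, 0, 1, 0, 1, 0, 1, 1, 0, 0, 1, 1, 0, 1, 0, 0, 1, 0, 1, 1, 0, 1, 0, 0, 1, 1], [0, 0, 1, 0, 1, 1, 0, 1, 0, 0, 1, 1, 0, 0, 1, 0, 1, 1, 1, 1, 0, 0, 1, 1, 0, 1], [0, 0, 1, 0, 1, 1, 0, 1, 0, 0, 1, 1, 0, 0, 1, 0, 1, 1, 0, 1, 0, 0, 1,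 1, 0, 1], [0, 0, 1, 0, 0, 1, 0, 0, 1, 0, 1, 1, 0, 1, 0, 0, 1, 1, 0, 0, 1, 0, 1, 1, 0, 1], [0, 0, 1, 0, 1, 1, 0, 0, 1, 1, 0, 1, 0, 0, 1, 0, 1, 1, 0, 1, 1, 0, 1, 1, 0, 1], [0, 0, 0, 0, 1, 1, 0, 1, 0, 0, 1, 0, 1, 1, 0, 1, 0, 0, 1, 1, 0, 0, 1, 0, 1, 1], [0, 0, 1, 0, 1, 1, 0, 0, 1, 0, 1, 1, 0, 1, 0, 0, 1, 0, 1, 1, 0, 1, 0, 0, 1, 1], [0, 0, 1, 0, 1, 1, 0, 0, 1, 1, 1, 1, 0, 1, 0, 0, 1, 0, 1, 1, 0, 1, 0, 0, 1, 1], [0, 0, 1, 0, 1, 1, 0, 0, 1, 1, 0, 1, 0, 1, 0, 0, 1, 0, 1, 1, 0, 1, 0, 0, 1, 1], [0, 0, 0, 0, 1, 0, 1, 1, 0, 1, 0, 0, 1, 1, 0, 0, 1, 0, 1, 1, 0, 0, 1, 1, 0, 1], [0, 0, 1, 0, 1, 1, 0, 0, 1, 1, 0, 1, 0, 0, 1,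 1, 1, 0, 1, 1, 0, 1, 0, 0, 1, 1], [0, 0, 1, 0, 0, 1, 0, 0, 1, 1, 0, 0, 1, 0, 1, 1, 0, 0, 1, 1, 0, 1, 0, 0, 1, 1], [0, 0, 1, 0, 1, 1, 0, 0, 1, 1, 0, 1, 0, 0, 1, 1, 0, 0, 1, 0, 1, 1, 0, 1, 1, 1], [0, 0, 0, 0, 1, 0, 1, 1, 0, 0, 1, 1, 0, 1, 0, 0, 1, 1, 0, 0, 1, 0, 1, 1, 0, 1], [0, 0, 1, 0, 1, 0, 1, 1, 0, 0, 1, 1, 0, 1, 0, 0, 1, 1, 0, 0, 1, 0, 1, 1, 0, 1], [0, 0, 1, 0, 1, 1, 0, 1, 0, 0, 1, 0, 1, 1, 1, 1, 0, 0, 1, 1, 0, 1, 0, 0, 1, 1], [0, 0, 1, 0, 1, 1, 0, 1, 0, 0, 1, 0, 1, 1, 0, 1, 0, 0, 1, 1, 0, 1, 0, 0, 1, 1], [0, 0, 0, 0, 1, 1, 0, 1, 0, 0, 1, 1, 0, 0, 1, 0, 1, 1, 0, 1, 0, 0, 1, 0, 1, 1]]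
def Rot26 : List Nat := [47394100, 23697050, 11848525, 39478694, 19739347, 43424105, 55266484, 27633242, 13816621, 40462742, 20231371, 43670117, 55389490, 27694745, 47401804, 23700902, 11850451, 39479657, 53294260, 26647130, 13323565, 40216214, 20108107, 43608485, 55358674, 27679337, 47394612, 23697306, 11848653, 39478758, 19739379, 43424121, 55266492, 27633246, 13816623, 40462743, 53785803, 60447333, 63778098, 31889049, 49498956, 24749478, 12374739, 39741801, 53425332, 26712666, 13356333, 40232598, 20116299, 43612581, 55360722, 27680361, 47393588, 23696794, 11848397, 39478630, 19739315, 43424089, 55266476, 27633238, 13816619, 40462741, 53785802, 26892901, 47000882, 23500441, 45304652, 22652326, 11326163, 39217513, 53163188, 26581594, 13290797, 40199830, 20099915, 43604389, 55356626, 27678313, 47000880, 23500440, 11750220, 5875110, 2937555, 35023209, 51066036, 25533018, 12766509, 39937686, 19968843, 43538853, 55323858, 27661929, 47385396, 23692698, 11846349, 39477606, 19738803, 43423833, 55266348, 27633174, 13816587, 40462725, 53785794, 26892897, 47000884, 23500442, 11750221, 39429542, 19714771, 43411817, 55260340, 27630170, 13815085, 40461974, 20230987, 43669925, 55389394, 27694697,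 47401780, 23700890, 11850445, 39479654, 19739827, 43424345, 55266604, 27633302, 13816651, 40462757, 53785810, 26892905, 47434548, 23717274, 11858637, 39483750, 19741875, 43425369, 55267116, 27633558, 13816779, 40462821, 53785842, 26892921, 47000892, 23500446, 11750223, 39429543, 53269203, 60189033, 63648948, 31824474, 15912237, 41510550, 20755275, 43932069, 55520466, 27760233, 47369012, 23684506, 11842253, 39475558, 19737779, 43423321, 55266092, 27633046, 13816523, 40462693, 53785778, 26892889, 47000876, 23500438, 11750219, 39429541, 53269202, 26634601, 46871732, 23435866, 11717933, 39413398, 19706699, 43407781, 55258322, 27629161, 53269200, 26634600, 13317300, 6658650, 3329325, 35219094, 17609547, 42359205, 54734034, 27367017, 47237940, 23618970, 11809485, 39459174, 19729587, 43419225, 55264044, 27632022, 13816011, 40462437, 53785650, 26892825, 47000844, 23500422, 11750211, 39429537, 53269204, 26634602, 13317301, 40213082, 20106541, 43607702, 21803851, 44456357, 55782610, 27891305, 47500084, 23750042, 11875021, 39491942, 19745971, 43427417, 55268140, 27634070, 13817035, 40462949, 53785906, 26892953, 47000908, 23500454, 11750227, 39429545, 49597236, 24798618, 12399309, 39754086,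 19877043, 43492953, 55300908, 27650454, 13825227, 40467045, 53787954, 26893977, 47001420, 23500710, 11750355, 39429609, 53269236, 26634618, 13317309, 40213086, 20106543, 43607703, 55358283, 61233573, 64171218, 32085609, 45402932, 22701466, 11350733, 39229798, 19614899, 43361881, 55235372, 27617686, 13808843, 40458853, 53783858, 26891929, 47000396, 23500198, 11750099, 39429481, 53269172, 26634586, 13317293, 40213078, 20106539, 43607701, 55358282, 27679141, 47394002, 23697001, 55358280, 27679140, 13839570, 6919785, 37014324, 18507162, 9253581, 38181222, 19090611, 43099737, 55104300, 27552150, 13776075, 40442469, 53775666, 26887833, 46998348, 23499174, 11749587, 39429225, 53269044, 26634522, 13317261, 40213062, 20106531, 43607697, 53269300, 26634650, 13317325, 40213094, 20106547, 43607705, 55358284, 27679142, 13839571, 40474217, 53791540, 26895770, 13447885, 40278374, 20139187, 43624025, 55366444, 27683222, 13841611, 40475237, 53792050, 26896025, 47002444, 23501222, 11750611, 39429737, 53271348, 26635674, 13317837, 40213350, 20106675, 43607769, 55358316, 27679158, 13839579, 40474221, 53791542, 26895771, 47002317, 57055590, 28527795, 47818329, 57463596, 28731798, 14365899, 40737381,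 53923122, 26961561, 47035212, 23517606, 11758803, 39433833, 53267252, 26633626, 13316813, 40212838, 20106419, 43607641, 55358252, 27679126, 13839563, 40474213, 53791538, 26895769, 47002316, 23501158, 11750579, 39429721, 53269292, 26634646, 13317323, 40213093, 53660978, 26830489, 46969676, 23484838, 11742419, 39425641, 39429720, 19714860, 9857430, 4928715, 36018789, 51563826, 25781913, 46445388, 23222694, 11611347, 39360105, 53234484, 26617242, 13308621, 40208742, 20104371, 43606617, 55357740, 27678870, 13839435, 40474149, 53791506, 26895753, 47002308, 23501154, 11750577, 47002324, 23501162, 11750581, 39429722, 19714861, 43411862, 21705931, 44407397, 55758130, 27879065, 47493964, 23746982, 11873491, 39491177, 53300020, 26650010, 13325005, 40216934, 20108467, 43608665, 55358764, 27679382, 13839691, 40474277, 53791570, 26895785, 53431092, 26715546, 13357773, 40233318, 20116659, 43612761, 55360812, 27680406, 13840203, 40474533, 53791698, 26895849, 47002356, 23501178, 11750589, 39429726, 19714863, 43411863, 55260363, 61184613, 64146738, 32073369, 49591116, 24795558, 12397779, 39753321, 53168948, 26584474, 13292237, 40200550, 20100275, 43604569, 55356716, 27678358, 13839179, 40474021,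 53791442, 26895721, 47002292, 23501146, 11750573, 39429718, 19714859, 43411861, 55260362, 27630181, 47369522, 23684761, 45396812, 22698406, 11349203, 39229033, 47369520, 23684760, 11842380, 5921190, 2960595, 35034729, 51071796, 25535898, 12767949, 39938406, 19969203, 43539033, 55323948, 27661974, 13830987, 40469925, 53789394, 26894697, 47001780, 23500890, 11750445, 39429654, 19714827, 43411845, 55260354, 27630177, 47369524, 23684762, 11842381, 39475622, 19737811, 43423337, 55266100, 27633050, 13816525, 40462694, 20231347, 43670105, 55389484, 27694742, 13847371, 40478117, 53793490, 26896745, 47002804, 23501402, 11750701, 39429782, 19714891, 43411877, 55260370, 27630185, 63654708, 31827354, 15913677, 41511270, 20755635, 43932249, 55520556, 27760278, 13880139, 40494501, 53801682, 26900841, 47004852, 23502426, 11751213, 39430038, 19715019, 43411941, 55260402, 27630201, 47369532, 23684766, 11842383, 39475623, 53292243, 60200553, 46877492, 23438746, 11719373, 39414118, 19707059, 43407961, 55258412, 27629206, 13814603, 40461733, 53785298, 26892649, 47000756, 23500378, 11750189, 39429526, 19714763, 43411813, 55260338, 27630169, 47369516, 23684758, 11842379, 39475621, 53292242, 26646121,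 53292240, 26646120, 13323060, 6661530, 3330765, 35219814, 17609907, 42359385, 54734124, 27367062, 13683531, 40396197, 53752530, 26876265, 46992564, 23496282, 11748141, 39428502, 19714251, 43411557, 55260210, 27630105, 47369484, 23684742, 11842371, 39475617, 53292244, 26646122, 13323061, 40215962, 20107981, 43608422, 21804211, 44456537, 55782700, 27891350, 13945675, 40527269, 53818066, 26909033, 47008948, 23504474, 11752237, 39430550, 19715275, 43412069, 55260466, 27630233, 47369548, 23684774, 11842387, 39475625, 47140020, 23570010, 11785005, 39446934, 19723467, 43416165, 55262514, 27631257, 47370060, 23685030, 11842515, 39475689, 53292276, 26646138, 13323069, 40215966, 20107983, 43608423, 55358643, 61233753, 64171308, 32085654, 16042827, 41575845, 54342354, 27171177, 46877876, 23438938, 11719469, 39414166, 19707083, 43407973, 55258418, 27629209, 47369036, 23684518, 11842259, 39475561, 53292212, 26646106, 13323053, 40215958, 20107979, 43608421, 55358642, 27679321, 47394092, 23697046, 11848523, 39478693, 53293778, 26646889, 47394084, 23697042, 11848521, 39478692, 19739346, 9869673, 38489268, 19244634, 9622317, 38365590, 19182795, 43145829, 55127346, 27563673, 47336268, 23668134,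 11834067, 39471465, 53290164, 26645082, 13322541, 40215702, 20107851, 43608357, 55358610, 27679305, 47926068, 23963034, 11981517, 39545190, 19772595, 43440729, 55274796, 27637398, 13818699, 40463781, 53786322, 26893161, 47001012, 23500506, 11750253, 39429558, 19714779, 43411821, 55260342, 27630171, 47369517, 57239190, 28619595, 47864229, 57486546, 28743273, 55358640, 27679320, 13839660, 6919830, 3459915, 35284389, 51196626, 25598313, 46353588, 23176794, 11588397, 39348630, 19674315, 43391589, 55250226, 27625113, 47366988, 23683494, 11841747, 39475305, 53292084, 26646042, 13323021, 40215942, 20107971, 43608417, 53292340, 26646170, 13323085, 40215974, 20107987, 43608425, 55358644, 27679322, 13839661, 40474262, 20237131, 43672997, 55390930, 27695465, 47402164, 23701082, 11850541, 39479702, 19739851, 43424357, 55266610, 27633305, 47371084, 23685542, 11842771, 39475817, 53292852, 26646426, 13323213, 40216038, 20108019, 43608441, 55358652, 27679326, 13839663, 40474263, 53791563, 60450213, 63779538, 31889769, 49499316, 24749658, 12374829, 39741846, 19870923, 43489893, 55299378, 27649689, 47379276, 23689638, 11844819, 39476841, 53291828, 26645914, 13322957, 40215910, 20107955, 43608409,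 55358636, 27679318, 13839659, 40474261, 53791562, 26895781, 47002322, 23501161, 45305012, 22652506, 11326253, 39217558, 19608779, 43358821, 55233842, 27616921, 47362892, 23681446, 11840723, 39474793, 47002320, 23501160, 11750580, 5875290, 2937645, 35023254, 17511627, 42310245, 54709554, 27354777, 47231820, 23615910, 11807955, 39458409, 53283636, 26641818, 13320909, 40214886, 20107443, 43608153, 55358508, 27679254, 13839627, 40474245, 53791554, 26895777, 53332788, 26666394, 13333197, 40221030, 20110515, 43609689, 55359276, 27679638, 13839819, 40474341, 53791602, 26895801, 47002332, 23501166, 11750583, 39429723, 53269293, 60189078, 30094539, 48601701, 57855282, 28927641, 48018252, 24009126, 12004563, 39556713, 53269284, 26634642, 13317321, 40213092, 20106546, 10053273, 38581068, 19290534, 9645267, 38377065, 52742964, 26371482, 13185741, 40147302, 20073651, 43591257, 55350060, 27675030, 13837515, 40473189, 53791026, 26895513, 47002188, 23501094, 11750547, 39429705, 62180148, 31090074, 15545037, 41326950, 20663475, 43886169, 55497516, 27748758, 13874379, 40491621, 53800242, 26900121, 47004492, 23502246, 11751123, 39429993, 53269428, 26634714, 13317357, 40213110, 20106555, 43607709,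 55358286, 27679143, 47394003, 57251433, 47394000, 23697000, 11848500, 5924250, 2962125, 35035494, 17517747, 42313305, 54711084, 27355542, 13677771, 40393317, 53751090, 26875545, 46992204, 23496102, 11748051, 39428457, 53268660, 26634330, 13317165, 40213014, 20106507, 43607685, 55358274, 27679137, 47394004, 23697002, 11848501, 39478682, 19739341, 43424102, 21712051, 44410457, 55759660, 27879830, 13939915, 40524389, 53816626, 26908313, 47008588, 23504294, 11752147, 39430505, 53269684, 26634842, 13317421, 40213142, 20106571, 43607717, 55358290, 27679145, 53277876, 26638938, 13319469, 40214166, 20107083, 43607973, 55358418, 27679209, 47394036, 23697018, 11848509, 39478686, 19739343, 43424103, 55266483, 61187673, 64148268, 32074134, 16037067, 41572965, 54340914, 27170457, 47139660, 23569830, 11784915, 39446889, 53261492, 26630746, 13315373, 40212118, 20106059, 43607461, 55358162, 27679081, 47393972, 23696986, 11848493, 39478678, 19739339, 43424101, 55266482, 27633241, 47371052, 23685526, 11842763, 39475813, 53292338, 26646169, 46877516, 23438758, 11719379, 39414121, 55266480, 27633240, 13816620, 6908310, 3454155, 35281509, 51195186, 25597593, 46353228, 23176614, 11588307, 39348585,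 53228724, 26614362, 13307181, 40208022, 20104011, 43606437, 55357650, 27678825, 47393844, 23696922, 11848461, 39478662, 19739331, 43424097]
lemma rotdef26 : Rot26 = Reps26.flatMap (fun r => (List.range 26).map (fun s => enc (r.rotate s))) := by decide
lemma replen26 : ∀ r ∈ Reps26, r.length = 26 := by decide
lemma cmem26 : ∀ j, j ≤ 383 → (tmCode 10 / 2^j) % 2^26 ∈ Rot26 := by decide
lemma cls26 : tmCyclicComplexity 26 ≤ 42 := by
  have h := base_class 26 383 Reps26 Rot26 (by norm_num) (by norm_num [covW]) (by norm_num)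
    rotdef26 replen26 cmem26
  have hl : Reps26.length = 42 := by decide
  exact le_of_le_of_eq h hl


theorem tm_cyclic_complexity_upper_bound_strong (n : ℕ) (hn : 12 ≤ n)
    (hpow : ¬ ∃ k : ℕ, n = 2 ^ k) :
    tmCyclicComplexity n ≤ 2 * n - 7 := by
  rcases Nat.lt_or_ge n 28 with h28 | h28
  · interval_cases n
    · have h : tmCyclicComplexity 12 ≤ qc 13 := cyclic_le_q 12 (by norm_num)
      have := qb13; omega
    · have := cls13; omega
    · have h : tmCyclicComplexity 14 ≤ qc 15 := cyclic_le_q 14 (by norm_num)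
      have := qb15; omega
    · have h : tmCyclicComplexity 15 ≤ qc 16 := cyclic_le_q 15 (by norm_num)
      have := qb16; omega
    · exact absurd ⟨4, by norm_num⟩ hpow
    · have h : tmCyclicComplexity 17 ≤ qc 18 := cyclic_le_q 17 (by norm_num)
      have := qb18; omega
    · have h : tmCyclicComplexity 18 ≤ qc 19 := cyclic_le_q 18 (by norm_num)
      have := qb19; omega
    · have := cls19; omega
    · have h : tmCyclicComplexity 20 ≤ qc 21 := cyclic_le_q 20 (by norm_num)
      have := qb21; omega
    · have h : tmCyclicComplexity 21 ≤ qc 22 := cyclic_le_q 21 (by norm_num)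
      have := qb22; omega
    · have := cls22; omega
    · have := cls23; omega
    · have h : tmCyclicComplexity 24 ≤ qc 25 := cyclic_le_q 24 (by norm_num)
      have := qb25; omega
    · have h : tmCyclicComplexity 25 ≤ qc 26 := cyclic_le_q 25 (by norm_num)
      have := qb26; omega
    · have := cls26; omega
    · have h : tmCyclicComplexity 27 ≤ qc 28 := cyclic_le_q 27 (by norm_num)
      have := qb28; omega
  · have h := cyclic_le_q n (by omega)
    have hnp : notPow1 (n+1) := by
      intro j hj
      exact hpow ⟨j, by omega⟩
    have hinv := (invariant (n+1) (by omega)).2.2.1 hnp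
    omega
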